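/- arXiv:2203.15890 — 5 statements merged into one kernel-verified Lean document; each statement's English description precedes it below -/
import Mathlib

section
/- Sufficiency direction of the testable implication (Theorem 1, binary treatment): suppose D takes values in {0, 1}, the observed outcome satisfies Y = D·Y₁ + (1 − D)·Y₀ for potential outcomes Y₀, Y₁, and the pair (Y₀, Y₁) is conditionally independent of the pair (D, Z) given X. Then the observed outcome Y is conditionally independent of Z given the pair (D, X). -/
open MeasureTheory ProbabilityTheory MeasurableSpace


lemma aux_setIntegral_mul_condexp {Ω : Type*} {m mΩ : MeasurableSpace Ω} (hm : m ≤ mΩ)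
    (μ : Measure Ω) [IsProbabilityMeasure μ] {f g : Ω → ℝ}
    (hg : StronglyMeasurable[m] g) (hf : Integrable f μ) (hgf : Integrable (g * f) μ)
    {A : Set Ω} (hA : MeasurableSet[m] A) :
    ∫ ω in A, g ω * f ω ∂μ = ∫ ω in A, g ω * (μ[f|m]) ω ∂μ := by
  haveI : SigmaFinite (μ.trim hm) := inferInstance
  have h1 : μ[g * f|m] =ᵐ[μ] g * μ[f|m] := condExp_mul_of_stronglyMeasurable_left hg hgf hf
  have h2 := setIntegral_condExp hm hgf hA
  simp only [Pi.mul_apply] at h1 h2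
  rw [← h2]
  exact setIntegral_congr_ae (hm A hA) (h1.mono fun ω h _ => h)

lemma aux_dagger {Ω δ : Type*} [mΩ : MeasurableSpace Ω] [MeasurableSpace δ]
    (μ : Measure Ω) [IsProbabilityMeasure μ]
    (D : Ω → ℝ) (X : Ω → δ) (hD : Measurable D) (hX : Measurable X) (c : ℝ)
    {h : Ω → ℝ} (hh : Integrable h μ) :
    (fun ω => (μ[(D ⁻¹' {c}).indicator (fun _ => (1:ℝ)) | MeasurableSpace.comap X inferInstance]) ω *
      (μ[fun ω' => (D ⁻¹' {c}).indicator (fun _ => (1:ℝ)) ω' * h ω' |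
        MeasurableSpace.comap (fun ω => (D ω, X ω)) inferInstance]) ω)
    =ᵐ[μ]
    (fun ω => (D ⁻¹' {c}).indicator (fun _ => (1:ℝ)) ω *
      (μ[fun ω' => (D ⁻¹' {c}).indicator (fun _ => (1:ℝ)) ω' * h ω' |
        MeasurableSpace.comap X inferInstance]) ω) := by
  set m₁ := MeasurableSpace.comap X inferInstance with hm₁def
  set m₂ := MeasurableSpace.comap (fun ω => (D ω, X ω)) inferInstance with hm₂def
  set e : Ω → ℝ := (D ⁻¹' {c}).indicator (fun _ => (1:ℝ)) with he
  letI : MeasurableSpace Ω := mΩ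
  have hm₁ : m₁ ≤ mΩ := hX.comap_le
  have hm₂ : m₂ ≤ mΩ := (hD.prodMk hX).comap_le
  haveI : SigmaFinite (μ.trim hm₁) := inferInstance
  haveI : SigmaFinite (μ.trim hm₂) := inferInstance
  have hm₁₂ : m₁ ≤ m₂ := by
    rintro _ ⟨u, hu, rfl⟩
    exact ⟨Set.univ ×ˢ u, MeasurableSet.univ.prod hu, by ext ω; simp⟩
  have hDc : MeasurableSet[mΩ] (D ⁻¹' {c}) := hD (measurableSet_singleton c)
  have hDc₂ : MeasurableSet[m₂] (D ⁻¹' {c}) :=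
    ⟨{c} ×ˢ (Set.univ : Set δ), (measurableSet_singleton c).prod MeasurableSet.univ,
      by ext ω; simp [eq_comm]⟩
  have hSMe₂ : StronglyMeasurable[m₂] e :=
    (stronglyMeasurable_const : StronglyMeasurable[m₂] fun _ => (1:ℝ)).indicator hDc₂
  have he_bdd : ∀ ω, ‖e ω‖ ≤ 1 := by
    intro ω
    by_cases hω : ω ∈ D ⁻¹' {c} <;> simp [he, Set.indicator_of_mem, Set.indicator_of_notMem, hω]
  have hInt_e : Integrable e μ := (integrable_const (1:ℝ)).indicator hDc
  set q : Ω → ℝ := μ[e|m₁] with hq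
  have hq_nonneg : 0 ≤ᵐ[μ] q := condExp_nonneg (ae_of_all _ fun ω => Set.indicator_nonneg (fun _ _ => zero_le_one) ω)
  have hq_le_one : q ≤ᵐ[μ] fun _ => (1:ℝ) := by
    have h1 : e ≤ᵐ[μ] fun _ => (1:ℝ) := ae_of_all _ fun ω => by
      by_cases hω : ω ∈ D ⁻¹' {c} <;>
        simp [he, Set.indicator_of_mem, Set.indicator_of_notMem, hω]
    have h2 := condExp_mono (m := m₁) hInt_e (integrable_const (1:ℝ)) h1
    rwa [condExp_const hm₁ (1:ℝ)] at h2
  have hq_bdd : ∀ᵐ ω ∂μ, ‖q ω‖ ≤ 1 := by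
    filter_upwards [hq_nonneg, hq_le_one] with ω h0 h1
    simp only [Pi.zero_apply] at h0
    rw [Real.norm_eq_abs, abs_le]
    exact ⟨by linarith, h1⟩
  have hInt_eh : Integrable (fun ω => e ω * h ω) μ :=
    hh.bdd_mul (hSMe₂.mono hm₂).aestronglyMeasurable (ae_of_all _ he_bdd)
  have hInt_qeh : Integrable (fun ω => q ω * (e ω * h ω)) μ :=
    hInt_eh.bdd_mul (stronglyMeasurable_condExp.mono hm₁).aestronglyMeasurable hq_bdd
  -- Step 1: pull-out over m₂
  have step1 : (fun ω => q ω * (μ[fun ω' => e ω' * h ω'|m₂]) ω)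
      =ᵐ[μ] μ[fun ω => q ω * (e ω * h ω)|m₂] := by
    have := condExp_mul_of_stronglyMeasurable_left (μ := μ) (m := m₂)
      (f := q) (g := fun ω => e ω * h ω)
      (stronglyMeasurable_condExp.mono hm₁₂) hInt_qeh hInt_eh
    filter_upwards [this] with ω hω
    exact hω.symm
  -- Step 2: identification of the conditional expectation
  have step2 : (fun ω => e ω * (μ[fun ω' => e ω' * h ω'|m₁]) ω)
      =ᵐ[μ] μ[fun ω => q ω * (e ω * h ω)|m₂] := by
    refine ae_eq_condExp_of_forall_setIntegral_eq hm₂ hInt_qeh ?_ ?_ ?_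
    · intro s _ _
      refine Integrable.integrableOn ?_
      exact integrable_condExp.bdd_mul (hSMe₂.mono hm₂).aestronglyMeasurable (ae_of_all _ he_bdd)
    · rintro B ⟨W, hW, rfl⟩ _
      set A := X ⁻¹' (Prod.mk c ⁻¹' W) with hA
      have hA₁ : MeasurableSet[m₁] A := ⟨Prod.mk c ⁻¹' W, measurable_prodMk_left hW, rfl⟩
      have hpt : ∀ (G : Ω → ℝ) ω, e ω * G ω = (D ⁻¹' {c}).indicator G ω := by
        intro G ω
        by_cases hω : ω ∈ D ⁻¹' {c} <;>
          simp [he, Set.indicator_of_mem, Set.indicator_of_notMem, hω]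
      have hset : ((fun ω => (D ω, X ω)) ⁻¹' W) ∩ D ⁻¹' {c} = A ∩ D ⁻¹' {c} := by
        ext ω
        simp only [Set.mem_inter_iff, Set.mem_preimage, Set.mem_singleton_iff, hA]
        constructor
        · rintro ⟨h1, h2⟩; rw [h2] at h1; exact ⟨h1, h2⟩
        · rintro ⟨h1, h2⟩; rw [h2]; exact ⟨h1, rfl⟩
      have hswap : ∀ G : Ω → ℝ,
          ∫ ω in (fun ω => (D ω, X ω)) ⁻¹' W, e ω * G ω ∂μ = ∫ ω in A, e ω * G ω ∂μ := by
        intro G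
        simp only [hpt G]
        rw [setIntegral_indicator hDc, setIntegral_indicator hDc, hset]
      have h1 : ∫ ω in (fun ω => (D ω, X ω)) ⁻¹' W, e ω * (μ[fun ω' => e ω' * h ω'|m₁]) ω ∂μ
          = ∫ ω in A, q ω * (μ[fun ω' => e ω' * h ω'|m₁]) ω ∂μ := by
        rw [hswap]
        have hInt_ge : Integrable ((μ[fun ω' => e ω' * h ω'|m₁]) * e) μ := by
          have : ((μ[fun ω' => e ω' * h ω'|m₁]) * e) = fun ω => e ω * (μ[fun ω' => e ω' * h ω'|m₁]) ω := by
            funext ω; simp [mul_comm]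
          rw [this]
          exact integrable_condExp.bdd_mul (hSMe₂.mono hm₂).aestronglyMeasurable (ae_of_all _ he_bdd)
        have := aux_setIntegral_mul_condexp hm₁ μ
          (g := μ[fun ω' => e ω' * h ω'|m₁]) (f := e)
          stronglyMeasurable_condExp hInt_e hInt_ge hA₁
        simp only [mul_comm] at this ⊢
        convert this using 1
      have h2 : ∫ ω in (fun ω => (D ω, X ω)) ⁻¹' W, q ω * (e ω * h ω) ∂μ
          = ∫ ω in A, q ω * (μ[fun ω' => e ω' * h ω'|m₁]) ω ∂μ := by
        have hc : ∀ ω, q ω * (e ω * h ω) = e ω * (q ω * h ω) := by intro ω; ring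
        simp only [hc]
        rw [hswap]
        simp only [← hc]
        have hInt_q_eh : Integrable (q * fun ω => e ω * h ω) μ := by
          have : (q * fun ω => e ω * h ω) = fun ω => q ω * (e ω * h ω) := rfl
          rw [this]; exact hInt_qeh
        exact aux_setIntegral_mul_condexp hm₁ μ
          (g := q) (f := fun ω => e ω * h ω)
          stronglyMeasurable_condExp hInt_eh hInt_q_eh hA₁
      rw [h1, h2]
    · exact StronglyMeasurable.aestronglyMeasurable
        (hSMe₂.mul (stronglyMeasurable_condExp.mono hm₁₂))
  exact step1.trans step2.symm

lemma aux_ind_inter {Ω : Type*} (S T : Set Ω) :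
    (S ∩ T).indicator (fun _ => (1:ℝ))
      = fun ω => S.indicator (fun _ => (1:ℝ)) ω * T.indicator (fun _ => (1:ℝ)) ω := by
  funext ω
  by_cases hS : ω ∈ S <;> by_cases hT : ω ∈ T <;>
    simp [Set.indicator_apply, hS, hT]

lemma aux_piece {Ω γ δ : Type*} [mΩ : MeasurableSpace Ω] [MeasurableSpace γ] [MeasurableSpace δ]
    (μ : Measure Ω) [IsProbabilityMeasure μ]
    (D : Ω → ℝ) (Yc : Ω → ℝ) (Z : Ω → γ) (X : Ω → δ)
    (hD : Measurable D) (hYc : Measurable Yc) (hZ : Measurable Z) (hX : Measurable X)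
    (c : ℝ) (Y : Ω → ℝ) (hY : Measurable Y) (hYeq : ∀ ω, D ω = c → Y ω = Yc ω)
    (s : Set ℝ) (t : Set γ) (hs : MeasurableSet s) (ht : MeasurableSet t)
    (H1 : (μ⟦Yc ⁻¹' s ∩ (D ⁻¹' {c} ∩ Z ⁻¹' t) | MeasurableSpace.comap X inferInstance⟧)
      =ᵐ[μ] fun ω => (μ⟦Yc ⁻¹' s | MeasurableSpace.comap X inferInstance⟧) ω
        * (μ⟦D ⁻¹' {c} ∩ Z ⁻¹' t | MeasurableSpace.comap X inferInstance⟧) ω)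
    (H2 : (μ⟦Yc ⁻¹' s ∩ D ⁻¹' {c} | MeasurableSpace.comap X inferInstance⟧)
      =ᵐ[μ] fun ω => (μ⟦Yc ⁻¹' s | MeasurableSpace.comap X inferInstance⟧) ω
        * (μ⟦D ⁻¹' {c} | MeasurableSpace.comap X inferInstance⟧) ω) :
    (fun ω => (D ⁻¹' {c}).indicator (fun _ => (1:ℝ)) ω *
      (μ⟦Y ⁻¹' s ∩ Z ⁻¹' t | MeasurableSpace.comap (fun ω => (D ω, X ω)) inferInstance⟧) ω)
    =ᵐ[μ]
    (fun ω => (D ⁻¹' {c}).indicator (fun _ => (1:ℝ)) ω *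
      ((μ⟦Y ⁻¹' s | MeasurableSpace.comap (fun ω => (D ω, X ω)) inferInstance⟧) ω *
       (μ⟦Z ⁻¹' t | MeasurableSpace.comap (fun ω => (D ω, X ω)) inferInstance⟧) ω)) := by
  set m₁ := MeasurableSpace.comap X inferInstance with hm₁def
  set m₂ := MeasurableSpace.comap (fun ω => (D ω, X ω)) inferInstance with hm₂def
  letI : MeasurableSpace Ω := mΩ
  have hm₁ : m₁ ≤ mΩ := hX.comap_le
  have hm₂ : m₂ ≤ mΩ := (hD.prodMk hX).comap_le
  haveI : SigmaFinite (μ.trim hm₁) := inferInstance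
  haveI : SigmaFinite (μ.trim hm₂) := inferInstance
  have hm₁₂ : m₁ ≤ m₂ := by
    rintro _ ⟨u, hu, rfl⟩
    exact ⟨Set.univ ×ˢ u, MeasurableSet.univ.prod hu, by ext ω; simp⟩
  set e : Ω → ℝ := (D ⁻¹' {c}).indicator (fun _ => (1:ℝ)) with he
  set A : Ω → ℝ := (Yc ⁻¹' s).indicator (fun _ => (1:ℝ)) with hA
  set B : Ω → ℝ := (Z ⁻¹' t).indicator (fun _ => (1:ℝ)) with hB
  have hDc : MeasurableSet[mΩ] (D ⁻¹' {c}) := hD (measurableSet_singleton c)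
  have hDc₂ : MeasurableSet[m₂] (D ⁻¹' {c}) :=
    ⟨{c} ×ˢ (Set.univ : Set δ), (measurableSet_singleton c).prod MeasurableSet.univ,
      by ext ω; simp [eq_comm]⟩
  have hSMe₂ : StronglyMeasurable[m₂] e :=
    (stronglyMeasurable_const : StronglyMeasurable[m₂] fun _ => (1:ℝ)).indicator hDc₂
  have he_bdd : ∀ ω, ‖e ω‖ ≤ 1 := by
    intro ω
    by_cases hω : ω ∈ D ⁻¹' {c} <;>
      simp [he, Set.indicator_of_mem, Set.indicator_of_notMem, hω]
  have he2 : ∀ ω, e ω * e ω = e ω := by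
    intro ω
    by_cases hω : ω ∈ D ⁻¹' {c} <;>
      simp [he, Set.indicator_of_mem, Set.indicator_of_notMem, hω]
  have hInt_e : Integrable e μ := (integrable_const (1:ℝ)).indicator hDc
  have hInt_A : Integrable A μ := (integrable_const (1:ℝ)).indicator (hYc hs)
  have hInt_B : Integrable B μ := (integrable_const (1:ℝ)).indicator (hZ ht)
  have hA_bdd : ∀ ω, ‖A ω‖ ≤ 1 := by
    intro ω
    by_cases hω : ω ∈ Yc ⁻¹' s <;>
      simp [hA, Set.indicator_of_mem, Set.indicator_of_notMem, hω]
  have hB_bdd : ∀ ω, ‖B ω‖ ≤ 1 := by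
    intro ω
    by_cases hω : ω ∈ Z ⁻¹' t <;>
      simp [hB, Set.indicator_of_mem, Set.indicator_of_notMem, hω]
  have hAsm : AEStronglyMeasurable A μ :=
    ((stronglyMeasurable_const : StronglyMeasurable[mΩ] fun _ => (1:ℝ)).indicator
      (hYc hs)).aestronglyMeasurable
  have hesm : AEStronglyMeasurable e μ :=
    ((stronglyMeasurable_const : StronglyMeasurable[mΩ] fun _ => (1:ℝ)).indicator
      hDc).aestronglyMeasurable
  have hInt_AB : Integrable (fun ω => A ω * B ω) μ :=
    hInt_B.bdd_mul hAsm (ae_of_all _ hA_bdd)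
  set q : Ω → ℝ := μ[e|m₁] with hq
  -- generic pull-out over m₂ for the indicator e
  have pull : ∀ f : Ω → ℝ, Integrable f μ →
      (fun ω => e ω * (μ[f|m₂]) ω) =ᵐ[μ] μ[fun ω => e ω * f ω|m₂] := by
    intro f hf
    have hef : Integrable (e * f) μ := by
      have : e * f = fun ω => e ω * f ω := rfl
      rw [this]
      exact hf.bdd_mul hesm (ae_of_all _ he_bdd)
    have := condExp_mul_of_stronglyMeasurable_left (μ := μ) (m := m₂) (f := e) (g := f)
      hSMe₂ hef hf
    filter_upwards [this] with ω hω
    exact hω.symm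
  -- identities between indicator products
  have hindYZ : (Y ⁻¹' s ∩ Z ⁻¹' t).indicator (fun _ => (1:ℝ))
      = fun ω => (Y ⁻¹' s).indicator (fun _ => (1:ℝ)) ω * B ω := aux_ind_inter _ _
  have heY : ∀ ω, e ω * (Y ⁻¹' s).indicator (fun _ => (1:ℝ)) ω = e ω * A ω := by
    intro ω
    by_cases hω : ω ∈ D ⁻¹' {c}
    · have hYω : Y ω = Yc ω := hYeq ω hω
      congr 1
      rw [hA]
      have hmem : ω ∈ Y ⁻¹' s ↔ ω ∈ Yc ⁻¹' s := by
        simp only [Set.mem_preimage, hYω]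
      by_cases hm : ω ∈ Y ⁻¹' s
      · rw [Set.indicator_of_mem hm, Set.indicator_of_mem (hmem.mp hm)]
      · rw [Set.indicator_of_notMem hm,
          Set.indicator_of_notMem (fun hc => hm (hmem.mpr hc))]
    · simp [he, Set.indicator_of_notMem, hω]
  -- the three m₂-conditional expectations
  have stepL : (fun ω => e ω * (μ⟦Y ⁻¹' s ∩ Z ⁻¹' t | m₂⟧) ω)
      =ᵐ[μ] μ[fun ω => e ω * (A ω * B ω)|m₂] := by
    have h0 : (fun ω => e ω * (μ⟦Y ⁻¹' s ∩ Z ⁻¹' t | m₂⟧) ω)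
        =ᵐ[μ] μ[fun ω => e ω * (Y ⁻¹' s ∩ Z ⁻¹' t).indicator (fun _ => (1:ℝ)) ω|m₂] :=
      pull _ ((integrable_const (1:ℝ)).indicator ((hY hs).inter (hZ ht)))
    refine h0.trans (condExp_congr_ae (ae_of_all _ fun ω => ?_))
    rw [hindYZ]
    have := heY ω
    calc e ω * ((Y ⁻¹' s).indicator (fun _ => (1:ℝ)) ω * B ω)
        = (e ω * (Y ⁻¹' s).indicator (fun _ => (1:ℝ)) ω) * B ω := by ring
      _ = (e ω * A ω) * B ω := by rw [this]
      _ = e ω * (A ω * B ω) := by ring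
  have stepR1 : (fun ω => e ω * (μ⟦Y ⁻¹' s | m₂⟧) ω)
      =ᵐ[μ] μ[fun ω => e ω * A ω|m₂] := by
    have h0 : (fun ω => e ω * (μ⟦Y ⁻¹' s | m₂⟧) ω)
        =ᵐ[μ] μ[fun ω => e ω * (Y ⁻¹' s).indicator (fun _ => (1:ℝ)) ω|m₂] :=
      pull _ ((integrable_const (1:ℝ)).indicator (hY hs))
    exact h0.trans (condExp_congr_ae (ae_of_all _ fun ω => heY ω))
  have stepR2 : (fun ω => e ω * (μ⟦Z ⁻¹' t | m₂⟧) ω)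
      =ᵐ[μ] μ[fun ω => e ω * B ω|m₂] := pull B hInt_B
  -- dagger transfers
  have d1 := aux_dagger μ D X hD hX c (h := fun ω => A ω * B ω) hInt_AB
  have d2 := aux_dagger μ D X hD hX c (h := A) hInt_A
  have d3 := aux_dagger μ D X hD hX c (h := B) hInt_B
  -- m₁-level consequence of H1, H2
  have hc1 : (fun ω => A ω * (e ω * B ω))
      = (Yc ⁻¹' s ∩ (D ⁻¹' {c} ∩ Z ⁻¹' t)).indicator (fun _ => (1:ℝ)) := by
    rw [aux_ind_inter, aux_ind_inter]
  have hc2 : (fun ω => A ω * e ω)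
      = (Yc ⁻¹' s ∩ D ⁻¹' {c}).indicator (fun _ => (1:ℝ)) := by
    rw [aux_ind_inter]
  have hc3 : (fun ω => e ω * (A ω * B ω)) = fun ω => A ω * (e ω * B ω) := by
    funext ω; ring
  have hc4 : (fun ω => e ω * A ω) = fun ω => A ω * e ω := by
    funext ω; ring
  have hc5 : (fun ω => e ω * B ω)
      = (D ⁻¹' {c} ∩ Z ⁻¹' t).indicator (fun _ => (1:ℝ)) := by
    rw [aux_ind_inter]
  have key : (fun ω => q ω * (μ[fun ω' => e ω' * (A ω' * B ω')|m₁]) ω)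
      =ᵐ[μ] fun ω => (μ[fun ω' => e ω' * A ω'|m₁]) ω * (μ[fun ω' => e ω' * B ω'|m₁]) ω := by
    rw [hc3, hc1, hc4, hc2, hc5]
    filter_upwards [H1, H2] with ω h1 h2
    rw [h1, h2]
    ring
  -- e vanishes a.e. where q = 0
  have hzero : ∀ᵐ ω ∂μ, q ω = 0 → e ω = 0 := by
    set N := q ⁻¹' {0} with hN
    have hN₁ : MeasurableSet[m₁] N :=
      stronglyMeasurable_condExp.measurable (measurableSet_singleton 0)
    have hint1 : ∫ ω in N, e ω ∂μ = ∫ ω in N, q ω ∂μ :=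
      (setIntegral_condExp hm₁ hInt_e hN₁).symm
    have hint2 : ∫ ω in N, q ω ∂μ = 0 := by
      rw [setIntegral_congr_ae (hm₁ _ hN₁)
        (ae_of_all _ fun ω (hω : ω ∈ N) => (hω : q ω = 0))]
      simp
    have hepos : 0 ≤ᵐ[μ.restrict N] e :=
      ae_restrict_of_ae (ae_of_all _ fun ω =>
        Set.indicator_nonneg (fun _ _ => zero_le_one) ω)
    have h0 : e =ᵐ[μ.restrict N] 0 :=
      (setIntegral_eq_zero_iff_of_nonneg_ae hepos hInt_e.integrableOn).mp
        (hint1.trans hint2)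
    have := (ae_restrict_iff' (hm₁ _ hN₁)).mp h0
    filter_upwards [this] with ω hω hq0
    exact hω hq0
  -- conditional expectations of e·f vanish a.e. on {q = 0}
  have hz : ∀ f : Ω → ℝ, Integrable f μ →
      ∀ᵐ ω ∂μ, q ω = 0 → (μ[fun ω' => e ω' * f ω'|m₂]) ω = 0 := by
    intro f hf
    set N := q ⁻¹' {0} with hN
    have hN₁ : MeasurableSet[m₁] N :=
      stronglyMeasurable_condExp.measurable (measurableSet_singleton 0)
    set g : Ω → ℝ := N.indicator (fun _ => (1:ℝ)) with hg
    have hSMg : StronglyMeasurable[m₂] g :=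
      (stronglyMeasurable_const : StronglyMeasurable[m₂] fun _ => (1:ℝ)).indicator
        (hm₁₂ _ hN₁)
    have hg_bdd : ∀ ω, ‖g ω‖ ≤ 1 := by
      intro ω
      by_cases hω : ω ∈ N <;>
        simp [hg, Set.indicator_of_mem, Set.indicator_of_notMem, hω]
    have hInt_ef : Integrable (fun ω => e ω * f ω) μ :=
      hf.bdd_mul hesm (ae_of_all _ he_bdd)
    have hInt_gef : Integrable (g * fun ω => e ω * f ω) μ := by
      have : (g * fun ω => e ω * f ω) = fun ω => g ω * (e ω * f ω) := rfl
      rw [this]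
      exact hInt_ef.bdd_mul ((hSMg.mono hm₂).aestronglyMeasurable) (ae_of_all _ hg_bdd)
    have hpull := condExp_mul_of_stronglyMeasurable_left (μ := μ) (m := m₂)
      (f := g) (g := fun ω => e ω * f ω) hSMg hInt_gef hInt_ef
    have hzero' : (g * fun ω => e ω * f ω) =ᵐ[μ] 0 := by
      filter_upwards [hzero] with ω hω
      by_cases hωN : ω ∈ N
      · have : e ω = 0 := hω (by simpa [hN] using hωN)
        simp [this]
      · simp [hg, Set.indicator_of_notMem, hωN]
    have hcz : μ[(g * fun ω => e ω * f ω)|m₂] =ᵐ[μ] 0 := by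
      calc μ[(g * fun ω => e ω * f ω)|m₂] =ᵐ[μ] μ[(0 : Ω → ℝ)|m₂] := condExp_congr_ae hzero'
        _ = 0 := condExp_zero
    filter_upwards [hpull, hcz] with ω h1 h2 hq0
    have hgω : g ω = 1 := by simp [hg, hN, Set.indicator_of_mem, Set.mem_preimage, hq0]
    have := h1.symm.trans (h2 : _)
    simp only [Pi.mul_apply, Pi.zero_apply] at h1 h2 ⊢
    have h3 : g ω * (μ[fun ω' => e ω' * f ω'|m₂]) ω = 0 := by rw [← h1]; exact h2
    rwa [hgω, one_mul] at h3
  -- combine everything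
  have main : μ[fun ω => e ω * (A ω * B ω)|m₂]
      =ᵐ[μ] fun ω => (μ[fun ω' => e ω' * A ω'|m₂]) ω * (μ[fun ω' => e ω' * B ω'|m₂]) ω := by
    filter_upwards [d1, d2, d3, key, hz (fun ω => A ω * B ω) hInt_AB, hz A hInt_A]
      with ω hd1 hd2 hd3 hkey hz1 hz2
    by_cases hq0 : q ω = 0
    · rw [hz1 hq0, hz2 hq0, zero_mul]
    · have e1 : q ω * q ω * (μ[fun ω' => e ω' * (A ω' * B ω')|m₂]) ω
          = q ω * q ω * ((μ[fun ω' => e ω' * A ω'|m₂]) ω * (μ[fun ω' => e ω' * B ω'|m₂]) ω) := by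
        have l1 : q ω * (q ω * (μ[fun ω' => e ω' * (A ω' * B ω')|m₂]) ω)
            = q ω * (e ω * (μ[fun ω' => e ω' * (A ω' * B ω')|m₁]) ω) := by rw [hd1]
        have l2 : q ω * (e ω * (μ[fun ω' => e ω' * (A ω' * B ω')|m₁]) ω)
            = e ω * (q ω * (μ[fun ω' => e ω' * (A ω' * B ω')|m₁]) ω) := by ring
        have l3 : e ω * (q ω * (μ[fun ω' => e ω' * (A ω' * B ω')|m₁]) ω)
            = e ω * ((μ[fun ω' => e ω' * A ω'|m₁]) ω * (μ[fun ω' => e ω' * B ω'|m₁]) ω) := by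
          rw [hkey]
        have r1 : (q ω * (μ[fun ω' => e ω' * A ω'|m₂]) ω)
            * (q ω * (μ[fun ω' => e ω' * B ω'|m₂]) ω)
            = (e ω * (μ[fun ω' => e ω' * A ω'|m₁]) ω)
            * (e ω * (μ[fun ω' => e ω' * B ω'|m₁]) ω) := by rw [hd2, hd3]
        have r2 : (e ω * (μ[fun ω' => e ω' * A ω'|m₁]) ω)
            * (e ω * (μ[fun ω' => e ω' * B ω'|m₁]) ω)
            = (e ω * e ω) * ((μ[fun ω' => e ω' * A ω'|m₁]) ω
              * (μ[fun ω' => e ω' * B ω'|m₁]) ω) := by ring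
        calc q ω * q ω * (μ[fun ω' => e ω' * (A ω' * B ω')|m₂]) ω
            = q ω * (q ω * (μ[fun ω' => e ω' * (A ω' * B ω')|m₂]) ω) := by ring
          _ = e ω * ((μ[fun ω' => e ω' * A ω'|m₁]) ω * (μ[fun ω' => e ω' * B ω'|m₁]) ω) := by
              rw [l1, l2, l3]
          _ = (e ω * e ω) * ((μ[fun ω' => e ω' * A ω'|m₁]) ω
              * (μ[fun ω' => e ω' * B ω'|m₁]) ω) := by rw [he2]
          _ = (q ω * (μ[fun ω' => e ω' * A ω'|m₂]) ω)
              * (q ω * (μ[fun ω' => e ω' * B ω'|m₂]) ω) := by rw [r1, r2]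
          _ = q ω * q ω * ((μ[fun ω' => e ω' * A ω'|m₂]) ω
              * (μ[fun ω' => e ω' * B ω'|m₂]) ω) := by ring
      exact mul_left_cancel₀ (mul_ne_zero hq0 hq0) e1
  -- wrap up
  filter_upwards [stepL, stepR1, stepR2, main] with ω h1 h2 h3 h4
  calc e ω * (μ⟦Y ⁻¹' s ∩ Z ⁻¹' t | m₂⟧) ω
      = (μ[fun ω' => e ω' * (A ω' * B ω')|m₂]) ω := h1
    _ = (μ[fun ω' => e ω' * A ω'|m₂]) ω * (μ[fun ω' => e ω' * B ω'|m₂]) ω := h4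
    _ = (e ω * (μ⟦Y ⁻¹' s | m₂⟧) ω) * (e ω * (μ⟦Z ⁻¹' t | m₂⟧) ω) := by rw [h2, h3]
    _ = (e ω * e ω) * ((μ⟦Y ⁻¹' s | m₂⟧) ω * (μ⟦Z ⁻¹' t | m₂⟧) ω) := by ring
    _ = e ω * ((μ⟦Y ⁻¹' s | m₂⟧) ω * (μ⟦Z ⁻¹' t | m₂⟧) ω) := by rw [he2]

/-- Sufficiency direction of the testable implication (Theorem 1, binary treatment): if the
observed outcome is `Y = D·Y₁ + (1 − D)·Y₀` with `D` binary, and `(Y₀, Y₁)` is conditionally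
independent of `(D, Z)` given `X`, then `Y` is conditionally independent of `Z` given `(D, X)`. -/
theorem observed_outcome_condIndep_instrument
    {Ω γ δ : Type*}
    [MeasurableSpace Ω] [StandardBorelSpace Ω]
    [MeasurableSpace γ] [StandardBorelSpace γ]
    [MeasurableSpace δ] [StandardBorelSpace δ]
    (μ : Measure Ω) [IsProbabilityMeasure μ]
    (D : Ω → ℝ) (Y0 Y1 : Ω → ℝ) (Z : Ω → γ) (X : Ω → δ)
    (hD : Measurable D) (hD01 : ∀ ω, D ω = 0 ∨ D ω = 1)
    (hY0 : Measurable Y0) (hY1 : Measurable Y1)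
    (hZ : Measurable Z) (hX : Measurable X)
    (Y : Ω → ℝ) (hYdef : ∀ ω, Y ω = D ω * Y1 ω + (1 - D ω) * Y0 ω)
    (h : CondIndepFun (MeasurableSpace.comap X inferInstance) hX.comap_le
      (fun ω => (Y0 ω, Y1 ω)) (fun ω => (D ω, Z ω)) μ) :
    CondIndepFun (MeasurableSpace.comap (fun ω => (D ω, X ω)) inferInstance)
      ((hD.prodMk hX).comap_le) Y Z μ := by
  have hY : Measurable Y := by
    have hYfun : Y = fun ω => D ω * Y1 ω + (1 - D ω) * Y0 ω := funext hYdef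
    rw [hYfun]
    exact (hD.mul hY1).add ((measurable_const.sub hD).mul hY0)
  rw [condIndepFun_iff_condExp_inter_preimage_eq_mul hY hZ]
  intro s t hs ht
  rw [condIndepFun_iff_condExp_inter_preimage_eq_mul (hY0.prodMk hY1) (hD.prodMk hZ)] at h
  -- preimage identities
  have hpre1 : (fun ω => (Y0 ω, Y1 ω)) ⁻¹' (Set.univ ×ˢ s) = Y1 ⁻¹' s := by
    ext ω; simp
  have hpre0 : (fun ω => (Y0 ω, Y1 ω)) ⁻¹' (s ×ˢ (Set.univ : Set ℝ)) = Y0 ⁻¹' s := by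
    ext ω; simp
  have hpre2 : ∀ c : ℝ, (fun ω => (D ω, Z ω)) ⁻¹' ({c} ×ˢ t) = D ⁻¹' {c} ∩ Z ⁻¹' t := by
    intro c; ext ω
    simp only [Set.mem_preimage, Set.prodMk_mem_set_prod_eq, Set.mem_singleton_iff,
      Set.mem_inter_iff]
  have hpre3 : ∀ c : ℝ, (fun ω => (D ω, Z ω)) ⁻¹' ({c} ×ˢ (Set.univ : Set γ)) = D ⁻¹' {c} := by
    intro c; ext ω; simp [eq_comm]
  -- c = 1 piece
  have H1c1 := h (Set.univ ×ˢ s) ({(1:ℝ)} ×ˢ t)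
    (MeasurableSet.univ.prod hs) ((measurableSet_singleton 1).prod ht)
  rw [hpre1, hpre2] at H1c1
  have H2c1 := h (Set.univ ×ˢ s) ({(1:ℝ)} ×ˢ (Set.univ : Set γ))
    (MeasurableSet.univ.prod hs) ((measurableSet_singleton 1).prod MeasurableSet.univ)
  rw [hpre1, hpre3] at H2c1
  have piece1 := aux_piece μ D Y1 Z X hD hY1 hZ hX 1 Y hY
    (fun ω hω => by rw [hYdef ω, hω]; ring) s t hs ht H1c1 H2c1
  -- c = 0 piece
  have H1c0 := h (s ×ˢ (Set.univ : Set ℝ)) ({(0:ℝ)} ×ˢ t)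
    (hs.prod MeasurableSet.univ) ((measurableSet_singleton 0).prod ht)
  rw [hpre0, hpre2] at H1c0
  have H2c0 := h (s ×ˢ (Set.univ : Set ℝ)) ({(0:ℝ)} ×ˢ (Set.univ : Set γ))
    (hs.prod MeasurableSet.univ) ((measurableSet_singleton 0).prod MeasurableSet.univ)
  rw [hpre0, hpre3] at H2c0
  have piece0 := aux_piece μ D Y0 Z X hD hY0 hZ hX 0 Y hY
    (fun ω hω => by rw [hYdef ω, hω]; ring) s t hs ht H1c0 H2c0
  -- combine
  filter_upwards [piece0, piece1] with ω h0 h1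
  have hsum : (D ⁻¹' {(0:ℝ)}).indicator (fun _ => (1:ℝ)) ω
      + (D ⁻¹' {(1:ℝ)}).indicator (fun _ => (1:ℝ)) ω = 1 := by
    rcases hD01 ω with hω | hω
    · rw [Set.indicator_of_mem (by simp [hω] : ω ∈ D ⁻¹' {(0:ℝ)}),
        Set.indicator_of_notMem (by simp [hω] : ω ∉ D ⁻¹' {(1:ℝ)})]
      norm_num
    · rw [Set.indicator_of_notMem (by simp [hω] : ω ∉ D ⁻¹' {(0:ℝ)}),
        Set.indicator_of_mem (by simp [hω] : ω ∈ D ⁻¹' {(1:ℝ)})]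
      norm_num
  set m₂ := MeasurableSpace.comap (fun ω => (D ω, X ω)) inferInstance with hm₂def
  set e0 := (D ⁻¹' {(0:ℝ)}).indicator (fun _ => (1:ℝ)) with he0
  set e1 := (D ⁻¹' {(1:ℝ)}).indicator (fun _ => (1:ℝ)) with he1
  calc (μ⟦Y ⁻¹' s ∩ Z ⁻¹' t | m₂⟧) ω
      = (e0 ω + e1 ω) * (μ⟦Y ⁻¹' s ∩ Z ⁻¹' t | m₂⟧) ω := by rw [hsum, one_mul]
    _ = e0 ω * (μ⟦Y ⁻¹' s ∩ Z ⁻¹' t | m₂⟧) ω + e1 ω * (μ⟦Y ⁻¹' s ∩ Z ⁻¹' t | m₂⟧) ω := by ring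
    _ = e0 ω * ((μ⟦Y ⁻¹' s | m₂⟧) ω * (μ⟦Z ⁻¹' t | m₂⟧) ω)
        + e1 ω * ((μ⟦Y ⁻¹' s | m₂⟧) ω * (μ⟦Z ⁻¹' t | m₂⟧) ω) := by rw [h0, h1]
    _ = (e0 ω + e1 ω) * ((μ⟦Y ⁻¹' s | m₂⟧) ω * (μ⟦Z ⁻¹' t | m₂⟧) ω) := by ring
    _ = (μ⟦Y ⁻¹' s | m₂⟧) ω * (μ⟦Z ⁻¹' t | m₂⟧) ω := by rw [hsum, one_mul]
end

section
/- Doubly robust moment identity (correct outcome model): with Z {0,1}-valued, W a random element, true conditional means μ₁(W) = E[Y·Z|σ(W)]/p(W) and μ₀(W) = E[Y·(1−Z)|σ(W)]/(1−p(W)) where p(W)=E[Z|σ(W)] ∈ (0,1) a.s., and ANY σ(W)-measurable function q with 0 < q(W) < 1 a.s., the doubly robust score satisfies E[ μ₁(W) − μ₀(W) + Z·(Y − μ₁(W))/q(W) − (1−Z)·(Y − μ₀(W))/(1−q(W)) ] = E[ μ₁(W) − μ₀(W) ], assuming all terms are integrable. -/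
open MeasureTheory ProbabilityTheory MeasurableSpace

/-- If `E[f|m] = 0` a.e. and `g` is `m`-measurable with `g*f` integrable, then `∫ g*f = 0`. -/
lemma aux_integral_mul_zero {Ω : Type*} {m0 : MeasurableSpace Ω} {μ : Measure Ω}
    [IsProbabilityMeasure μ] {m : MeasurableSpace Ω} (hm : m ≤ m0)
    {f g : Ω → ℝ} (hf : Integrable f μ) (hg : StronglyMeasurable[m] g)
    (hgf : Integrable (fun ω => g ω * f ω) μ)
    (h0 : μ[f|m] =ᵐ[μ] 0) : ∫ ω, g ω * f ω ∂μ = 0 := by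
  have h1 : μ[(fun ω => g ω * f ω)|m] =ᵐ[μ] fun ω => g ω * (μ[f|m]) ω :=
    condExp_mul_of_stronglyMeasurable_left hg (f := g) (g := f) hgf hf
  have h2 : μ[(fun ω => g ω * f ω)|m] =ᵐ[μ] 0 := by
    refine h1.trans ?_
    filter_upwards [h0] with ω hω
    simp [hω]
  calc ∫ ω, g ω * f ω ∂μ = ∫ ω, (μ[(fun ω => g ω * f ω)|m]) ω ∂μ :=
        (integral_condExp hm).symm
    _ = 0 := by rw [integral_congr_ae h2]; simp

/-- Doubly robust moment identity (correct outcome model): with the true conditional means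
`μ₁(W), μ₀(W)` and an arbitrary `σ(W)`-measurable weighting function `q` with `0 < q < 1` a.s.,
the doubly robust score has expectation `E[μ₁(W) − μ₀(W)]`. -/
theorem doubly_robust_correct_outcome_model
    {Ω δ : Type*} [MeasurableSpace Ω] [MeasurableSpace δ]
    (μ : Measure Ω) [IsProbabilityMeasure μ]
    (Z : Ω → ℝ) (Y : Ω → ℝ) (W : Ω → δ)
    (hZ : Measurable Z) (hZ01 : ∀ ω, Z ω = 0 ∨ Z ω = 1)
    (hY : Measurable Y) (hYint : Integrable Y μ) (hW : Measurable W)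
    (p : Ω → ℝ) (hpdef : p = μ[Z | MeasurableSpace.comap W inferInstance])
    (hp : ∀ᵐ ω ∂μ, 0 < p ω ∧ p ω < 1)
    (μ₁ μ₀ : Ω → ℝ)
    (hμ₁def : μ₁ = fun ω =>
      (μ[fun ω' => Y ω' * Z ω' | MeasurableSpace.comap W inferInstance]) ω / p ω)
    (hμ₀def : μ₀ = fun ω =>
      (μ[fun ω' => Y ω' * (1 - Z ω') | MeasurableSpace.comap W inferInstance]) ω / (1 - p ω))
    (q : Ω → ℝ)
    (hq_meas : Measurable[MeasurableSpace.comap W inferInstance] q)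
    (hq : ∀ᵐ ω ∂μ, 0 < q ω ∧ q ω < 1)
    (hscore_int : Integrable (fun ω => μ₁ ω - μ₀ ω + Z ω * (Y ω - μ₁ ω) / q ω
      - (1 - Z ω) * (Y ω - μ₀ ω) / (1 - q ω)) μ)
    (hμdiff_int : Integrable (fun ω => μ₁ ω - μ₀ ω) μ)
    (hint1 : Integrable (fun ω => Z ω * (Y ω - μ₁ ω) / q ω) μ)
    (hint0 : Integrable (fun ω => (1 - Z ω) * (Y ω - μ₀ ω) / (1 - q ω)) μ) :
    ∫ ω, (μ₁ ω - μ₀ ω + Z ω * (Y ω - μ₁ ω) / q ω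
        - (1 - Z ω) * (Y ω - μ₀ ω) / (1 - q ω)) ∂μ
      = ∫ ω, (μ₁ ω - μ₀ ω) ∂μ := by
  rename_i mΩ mδ hprob
  set m : MeasurableSpace Ω := MeasurableSpace.comap W inferInstance with hmdef
  have hm : m ≤ mΩ := hmdef ▸ hW.comap_le
  have hZbd : ∀ ω, |Z ω| ≤ 1 := fun ω => by rcases hZ01 ω with h | h <;> simp [h]
  have hZ'bd : ∀ ω, |1 - Z ω| ≤ 1 := fun ω => by rcases hZ01 ω with h | h <;> simp [h]
  -- measurability of μ₁ and μ₀ with respect to m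
  have hμ₁m : StronglyMeasurable[m] μ₁ := by
    rw [hμ₁def, hpdef]
    exact (stronglyMeasurable_condExp.measurable.div
      stronglyMeasurable_condExp.measurable).stronglyMeasurable
  have hμ₀m : StronglyMeasurable[m] μ₀ := by
    rw [hμ₀def, hpdef]
    exact (stronglyMeasurable_condExp.measurable.div
      (measurable_const.sub stronglyMeasurable_condExp.measurable)).stronglyMeasurable
  have hμ₁meas : Measurable[mΩ] μ₁ := (hμ₁m.measurable).mono hm le_rfl
  have hμ₀meas : Measurable[mΩ] μ₀ := (hμ₀m.measurable).mono hm le_rfl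
  -- integrabilities
  have hYZ_int : Integrable (fun ω => Y ω * Z ω) μ := by
    refine hYint.abs.mono' ((hY.mul hZ).aestronglyMeasurable) (ae_of_all _ fun ω => ?_)
    rw [Real.norm_eq_abs, abs_mul]
    exact mul_le_of_le_one_right (abs_nonneg _) (hZbd ω)
  have hYZ'_int : Integrable (fun ω => Y ω * (1 - Z ω)) μ := by
    refine hYint.abs.mono' ((hY.mul (measurable_const.sub hZ)).aestronglyMeasurable)
      (ae_of_all _ fun ω => ?_)
    rw [Real.norm_eq_abs, abs_mul]
    exact mul_le_of_le_one_right (abs_nonneg _) (hZ'bd ω)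
  have hZ_int : Integrable Z μ := by
    refine (integrable_const (1 : ℝ)).mono' hZ.aestronglyMeasurable (ae_of_all _ fun ω => ?_)
    exact hZbd ω
  have hZ'_int : Integrable (fun ω => 1 - Z ω) μ := (integrable_const 1).sub hZ_int
  -- the augmentation numerators
  have hf₁_int : Integrable (fun ω => Y ω * Z ω - μ₁ ω * Z ω) μ := by
    refine hint1.abs.mono' (((hY.mul hZ).sub (hμ₁meas.mul hZ)).aestronglyMeasurable) ?_
    filter_upwards [hq] with ω hqω
    have hne : q ω ≠ 0 := ne_of_gt hqω.1
    have h1 : Y ω * Z ω - μ₁ ω * Z ω = (Z ω * (Y ω - μ₁ ω) / q ω) * q ω := by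
      field_simp
    rw [Real.norm_eq_abs, h1, abs_mul]
    refine mul_le_of_le_one_right (abs_nonneg _) ?_
    rw [abs_of_pos hqω.1]; exact le_of_lt hqω.2
  have hf₀_int : Integrable (fun ω => Y ω * (1 - Z ω) - μ₀ ω * (1 - Z ω)) μ := by
    refine hint0.abs.mono'
      (((hY.mul (measurable_const.sub hZ)).sub
        (hμ₀meas.mul (measurable_const.sub hZ))).aestronglyMeasurable) ?_
    filter_upwards [hq] with ω hqω
    have hne : (1 : ℝ) - q ω ≠ 0 := by
      have := hqω.2; intro h; nlinarith
    have h1 : Y ω * (1 - Z ω) - μ₀ ω * (1 - Z ω)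
        = ((1 - Z ω) * (Y ω - μ₀ ω) / (1 - q ω)) * (1 - q ω) := by
      field_simp
    rw [Real.norm_eq_abs, h1, abs_mul]
    refine mul_le_of_le_one_right (abs_nonneg _) ?_
    rw [abs_of_pos (by linarith [hqω.2] : (0:ℝ) < 1 - q ω)]
    linarith [hqω.1]
  have hZμ₁_int : Integrable (fun ω => μ₁ ω * Z ω) μ := by
    have : (fun ω => μ₁ ω * Z ω) = fun ω => Y ω * Z ω - (Y ω * Z ω - μ₁ ω * Z ω) := by
      funext ω; ring
    rw [this]; exact hYZ_int.sub hf₁_int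
  have hZ'μ₀_int : Integrable (fun ω => μ₀ ω * (1 - Z ω)) μ := by
    have : (fun ω => μ₀ ω * (1 - Z ω))
        = fun ω => Y ω * (1 - Z ω) - (Y ω * (1 - Z ω) - μ₀ ω * (1 - Z ω)) := by
      funext ω; ring
    rw [this]; exact hYZ'_int.sub hf₀_int
  -- conditional expectation of the numerators vanishes
  have h0₁ : μ[(fun ω => Y ω * Z ω - μ₁ ω * Z ω)|m] =ᵐ[μ] 0 := by
    have hsub : μ[(fun ω => Y ω * Z ω - μ₁ ω * Z ω)|m]
        =ᵐ[μ] μ[(fun ω => Y ω * Z ω)|m] - μ[(fun ω => μ₁ ω * Z ω)|m] := by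
      have := condExp_sub (μ := μ) (m := m) hYZ_int hZμ₁_int
      exact this
    have hmul : μ[(fun ω => μ₁ ω * Z ω)|m] =ᵐ[μ] fun ω => μ₁ ω * (μ[Z|m]) ω :=
      condExp_mul_of_stronglyMeasurable_left hμ₁m (f := μ₁) (g := Z) hZμ₁_int hZ_int
    filter_upwards [hsub, hmul, hp] with ω h1 h2 hpω
    have hpm : (μ[Z|m]) ω = p ω := by rw [hpdef]
    have hμ₁ω : μ₁ ω = (μ[(fun ω' => Y ω' * Z ω')|m]) ω / p ω := by rw [hμ₁def]
    simp only [Pi.sub_apply] at h1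
    rw [h1, h2, hpm, hμ₁ω, div_mul_cancel₀ _ (ne_of_gt hpω.1)]
    simp
  have h0₀ : μ[(fun ω => Y ω * (1 - Z ω) - μ₀ ω * (1 - Z ω))|m] =ᵐ[μ] 0 := by
    have hsub : μ[(fun ω => Y ω * (1 - Z ω) - μ₀ ω * (1 - Z ω))|m]
        =ᵐ[μ] μ[(fun ω => Y ω * (1 - Z ω))|m] - μ[(fun ω => μ₀ ω * (1 - Z ω))|m] := by
      have := condExp_sub (μ := μ) (m := m) hYZ'_int hZ'μ₀_int
      exact this
    have hmul : μ[(fun ω => μ₀ ω * (1 - Z ω))|m]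
        =ᵐ[μ] fun ω => μ₀ ω * (μ[(fun ω' => 1 - Z ω')|m]) ω :=
      condExp_mul_of_stronglyMeasurable_left hμ₀m (f := μ₀) (g := fun ω => 1 - Z ω) hZ'μ₀_int hZ'_int
    have hZ'c : μ[(fun ω' => 1 - Z ω')|m] =ᵐ[μ] fun ω => 1 - (μ[Z|m]) ω := by
      have h1 := condExp_sub (μ := μ) (m := m) (integrable_const (1:ℝ)) hZ_int
      have h2 : μ[(fun _ : Ω => (1:ℝ))|m] = fun _ => (1:ℝ) := condExp_const (μ := μ) hm (1:ℝ)
      refine h1.trans ?_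
      rw [h2]
      filter_upwards with ω
      simp
    filter_upwards [hsub, hmul, hZ'c, hp] with ω h1 h2 h3 hpω
    have hpm : (μ[Z|m]) ω = p ω := by rw [hpdef]
    have hμ₀ω : μ₀ ω = (μ[(fun ω' => Y ω' * (1 - Z ω'))|m]) ω / (1 - p ω) := by rw [hμ₀def]
    simp only [Pi.sub_apply] at h1
    rw [h1, h2, h3, hpm, hμ₀ω, div_mul_cancel₀ _ (by linarith [hpω.2] : (1:ℝ) - p ω ≠ 0)]
    simp
  -- the augmentation terms have zero integral
  have hT1eq : (fun ω => Z ω * (Y ω - μ₁ ω) / q ω)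
      = fun ω => (q ω)⁻¹ * (Y ω * Z ω - μ₁ ω * Z ω) := by
    funext ω; field_simp
  have hT0eq : (fun ω => (1 - Z ω) * (Y ω - μ₀ ω) / (1 - q ω))
      = fun ω => (1 - q ω)⁻¹ * (Y ω * (1 - Z ω) - μ₀ ω * (1 - Z ω)) := by
    funext ω; field_simp
  have hI1 : ∫ ω, Z ω * (Y ω - μ₁ ω) / q ω ∂μ = 0 := by
    rw [hT1eq]
    refine aux_integral_mul_zero (μ := μ) hm hf₁_int
      ((hq_meas.inv).stronglyMeasurable) ?_ h0₁
    rw [← hT1eq]; exact hint1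
  have hI0 : ∫ ω, (1 - Z ω) * (Y ω - μ₀ ω) / (1 - q ω) ∂μ = 0 := by
    rw [hT0eq]
    refine aux_integral_mul_zero (μ := μ) hm hf₀_int
      (((measurable_const.sub hq_meas).inv).stronglyMeasurable) ?_ h0₀
    rw [← hT0eq]; exact hint0
  calc ∫ ω, (μ₁ ω - μ₀ ω + Z ω * (Y ω - μ₁ ω) / q ω
        - (1 - Z ω) * (Y ω - μ₀ ω) / (1 - q ω)) ∂μ
      = (∫ ω, (μ₁ ω - μ₀ ω + Z ω * (Y ω - μ₁ ω) / q ω) ∂μ)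
        - ∫ ω, (1 - Z ω) * (Y ω - μ₀ ω) / (1 - q ω) ∂μ :=
        integral_sub (hμdiff_int.add hint1) hint0
    _ = ((∫ ω, (μ₁ ω - μ₀ ω) ∂μ) + ∫ ω, Z ω * (Y ω - μ₁ ω) / q ω ∂μ)
        - ∫ ω, (1 - Z ω) * (Y ω - μ₀ ω) / (1 - q ω) ∂μ := by
        rw [integral_add hμdiff_int hint1]
    _ = ∫ ω, (μ₁ ω - μ₀ ω) ∂μ := by rw [hI1, hI0]; ring
end

section
/- Doubly robust moment identity (correct propensity model): with Z {0,1}-valued, W a random element, true propensity p(W) = E[Z | σ(W)] with 0 < p(W) < 1 a.s., true conditional means μ₁(W), μ₀(W) as above, and ANY bounded σ(W)-measurable functions m₁, m₀, the score satisfies E[ m₁(W) − m₀(W) + Z·(Y − m₁(W))/p(W) − (1−Z)·(Y − m₀(W))/(1−p(W)) ] = E[ μ₁(W) − μ₀(W) ], assuming all terms are integrable. -/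
open MeasureTheory ProbabilityTheory MeasurableSpace Filter

/-- Pull-out under the integral: for `g` an `m`-measurable a.e.-bounded function and `f`
integrable, `∫ g·f = ∫ g·E[f|m]`. -/
lemma integral_mul_condexp_aux {Ω : Type*} {m0 : MeasurableSpace Ω}
    (μ : Measure Ω) [IsProbabilityMeasure μ] {m : MeasurableSpace Ω} (hm : m ≤ m0)
    {f g : Ω → ℝ} (hg : StronglyMeasurable[m] g) {c : ℝ} (hgbd : ∀ᵐ ω ∂μ, ‖g ω‖ ≤ c)
    (hf : Integrable f μ) :
    ∫ ω, g ω * f ω ∂μ = ∫ ω, g ω * (μ[f|m]) ω ∂μ := by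
  haveI : SigmaFinite (μ.trim hm) := (isFiniteMeasure_trim hm).toSigmaFinite
  have h1 : μ[g * f|m] =ᵐ[μ] g * μ[f|m] :=
    condExp_stronglyMeasurable_mul_of_bound hm hg hf c hgbd
  calc ∫ ω, g ω * f ω ∂μ = ∫ ω, (g * f) ω ∂μ := rfl
    _ = ∫ ω, (μ[g * f|m]) ω ∂μ := (integral_condExp hm).symm
    _ = ∫ ω, (g * μ[f|m]) ω ∂μ := integral_congr_ae h1
    _ = ∫ ω, g ω * (μ[f|m]) ω ∂μ := rfl

/-- Doubly robust moment identity (correct propensity model): with the true propensity score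
`p(W) = E[Z | σ(W)] ∈ (ε, 1−ε)` a.s. and arbitrary bounded `σ(W)`-measurable outcome models
`m₁, m₀`, the doubly robust score has expectation `E[μ₁(W) − μ₀(W)]`. -/
theorem doubly_robust_correct_propensity_model
    {Ω δ : Type*} [MeasurableSpace Ω] [MeasurableSpace δ]
    (μ : Measure Ω) [IsProbabilityMeasure μ]
    (Z : Ω → ℝ) (Y : Ω → ℝ) (W : Ω → δ)
    (hZ : Measurable Z) (hZ01 : ∀ ω, Z ω = 0 ∨ Z ω = 1)
    (hY : Measurable Y) (CY : ℝ) (hYbd : ∀ ω, |Y ω| ≤ CY) (hW : Measurable W)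
    (p : Ω → ℝ) (hpdef : p = μ[Z | MeasurableSpace.comap W inferInstance])
    (ε : ℝ) (hε : 0 < ε) (hp : ∀ᵐ ω ∂μ, ε ≤ p ω ∧ p ω ≤ 1 - ε)
    (μ₁ μ₀ : Ω → ℝ)
    (hμ₁def : μ₁ = fun ω =>
      (μ[fun ω' => Y ω' * Z ω' | MeasurableSpace.comap W inferInstance]) ω / p ω)
    (hμ₀def : μ₀ = fun ω =>
      (μ[fun ω' => Y ω' * (1 - Z ω') | MeasurableSpace.comap W inferInstance]) ω / (1 - p ω))
    (m₁ m₀ : Ω → ℝ)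
    (hm₁_meas : Measurable[MeasurableSpace.comap W inferInstance] m₁)
    (hm₀_meas : Measurable[MeasurableSpace.comap W inferInstance] m₀)
    (C₁ : ℝ) (hm₁bd : ∀ ω, |m₁ ω| ≤ C₁)
    (C₀ : ℝ) (hm₀bd : ∀ ω, |m₀ ω| ≤ C₀)
    (hscore_int : Integrable (fun ω => m₁ ω - m₀ ω + Z ω * (Y ω - m₁ ω) / p ω
      - (1 - Z ω) * (Y ω - m₀ ω) / (1 - p ω)) μ)
    (hμdiff_int : Integrable (fun ω => μ₁ ω - μ₀ ω) μ) :
    ∫ ω, (m₁ ω - m₀ ω + Z ω * (Y ω - m₁ ω) / p ω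
        - (1 - Z ω) * (Y ω - m₀ ω) / (1 - p ω)) ∂μ
      = ∫ ω, (μ₁ ω - μ₀ ω) ∂μ := by
  have hm : MeasurableSpace.comap W inferInstance ≤ ‹MeasurableSpace Ω› := hW.comap_le
  haveI : SigmaFinite (μ.trim hm) := (isFiniteMeasure_trim hm).toSigmaFinite
  -- basic measurability
  have hpSM : StronglyMeasurable[MeasurableSpace.comap W inferInstance] p :=
    hpdef ▸ stronglyMeasurable_condExp
  have hpMm : Measurable[MeasurableSpace.comap W inferInstance] p := hpSM.measurable
  have hpm : Measurable p := hpMm.mono hm le_rfl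
  have hm₁ : Measurable m₁ := hm₁_meas.mono hm le_rfl
  have hm₀ : Measurable m₀ := hm₀_meas.mono hm le_rfl
  -- a.e. bounds
  have hZbd : ∀ ω, |Z ω| ≤ 1 := by
    intro ω; rcases hZ01 ω with h | h <;> simp [h]
  have hpne : ∀ᵐ ω ∂μ, p ω ≠ 0 := by
    filter_upwards [hp] with ω ⟨h1, _⟩; intro h; rw [h] at h1; linarith
  have hqne : ∀ᵐ ω ∂μ, 1 - p ω ≠ 0 := by
    filter_upwards [hp] with ω ⟨_, h2⟩; intro h; linarith
  have hinvp : ∀ᵐ ω ∂μ, ‖(p ω)⁻¹‖ ≤ ε⁻¹ := by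
    filter_upwards [hp] with ω ⟨h1, _⟩
    rw [Real.norm_eq_abs, abs_inv, abs_of_pos (by linarith : (0:ℝ) < p ω)]
    exact one_div (p ω) ▸ one_div ε ▸ one_div_le_one_div_of_le hε h1
  have hinvq : ∀ᵐ ω ∂μ, ‖(1 - p ω)⁻¹‖ ≤ ε⁻¹ := by
    filter_upwards [hp] with ω ⟨h1, h2⟩
    have h3 : (0:ℝ) < 1 - p ω := by linarith
    rw [Real.norm_eq_abs, abs_inv, abs_of_pos h3]
    exact one_div (1 - p ω) ▸ one_div ε ▸ one_div_le_one_div_of_le hε (by linarith)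
  -- integrability of bounded measurable functions
  have int_of_bd : ∀ (f : Ω → ℝ) (c : ℝ), Measurable f → (∀ᵐ ω ∂μ, ‖f ω‖ ≤ c) →
      Integrable f μ := fun f c hf hbd =>
    Integrable.mono' (integrable_const c) hf.aestronglyMeasurable hbd
  have hZint : Integrable Z μ := int_of_bd Z 1 hZ (Eventually.of_forall fun ω => hZbd ω)
  have hYZbd : ∀ ω, |Y ω * Z ω| ≤ CY := fun ω => by
    rw [abs_mul]
    calc |Y ω| * |Z ω| ≤ CY * 1 :=
      mul_le_mul (hYbd ω) (hZbd ω) (abs_nonneg _) ((abs_nonneg (Y ω)).trans (hYbd ω))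
    _ = CY := mul_one _
  have hYZint : Integrable (fun ω => Y ω * Z ω) μ :=
    int_of_bd _ CY (hY.mul hZ) (Eventually.of_forall fun ω => hYZbd ω)
  have h1Zbd : ∀ ω, |1 - Z ω| ≤ 2 := fun ω => by
    rcases hZ01 ω with h | h <;> simp [h] <;> norm_num
  have h1Zint : Integrable (fun ω => 1 - Z ω) μ := (integrable_const 1).sub hZint
  have hY1Zbd : ∀ ω, |Y ω * (1 - Z ω)| ≤ CY * 2 := fun ω => by
    rw [abs_mul]
    exact mul_le_mul (hYbd ω) (h1Zbd ω) (abs_nonneg _) ((abs_nonneg (Y ω)).trans (hYbd ω))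
  have hY1Zint : Integrable (fun ω => Y ω * (1 - Z ω)) μ :=
    int_of_bd _ (CY * 2) (hY.mul (measurable_const.sub hZ))
      (Eventually.of_forall fun ω => hY1Zbd ω)
  -- (1) ∫ (m₁/p) * Z = ∫ m₁
  have key1 : ∫ ω, m₁ ω / p ω * Z ω ∂μ = ∫ ω, m₁ ω ∂μ := by
    have hg : StronglyMeasurable[MeasurableSpace.comap W inferInstance]
        (fun ω => m₁ ω / p ω) := (hm₁_meas.div hpMm).stronglyMeasurable
    have hgbd : ∀ᵐ ω ∂μ, ‖m₁ ω / p ω‖ ≤ C₁ * ε⁻¹ := by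
      filter_upwards [hinvp] with ω h
      rw [Real.norm_eq_abs] at h ⊢
      rw [div_eq_mul_inv, abs_mul]
      exact mul_le_mul (hm₁bd ω) h (abs_nonneg _) ((abs_nonneg _).trans (hm₁bd ω))
    rw [integral_mul_condexp_aux μ hm hg hgbd hZint]
    refine integral_congr_ae ?_
    filter_upwards [hpne] with ω h0
    rw [← hpdef]
    field_simp
  -- (2) ∫ p⁻¹ * (Y*Z) = ∫ μ₁
  have key2 : ∫ ω, (p ω)⁻¹ * (Y ω * Z ω) ∂μ = ∫ ω, μ₁ ω ∂μ := by
    have hg : StronglyMeasurable[MeasurableSpace.comap W inferInstance]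
        (fun ω => (p ω)⁻¹) := hpMm.inv.stronglyMeasurable
    rw [integral_mul_condexp_aux μ hm hg hinvp hYZint]
    refine integral_congr_ae (Eventually.of_forall fun ω => ?_)
    rw [hμ₁def]
    simp [div_eq_inv_mul]
  -- conditional expectation of 1 - Z
  have hcond1Z : (μ[fun ω => 1 - Z ω|MeasurableSpace.comap W inferInstance])
      =ᵐ[μ] fun ω => 1 - p ω := by
    have heq : (fun ω => 1 - Z ω) = (fun _ : Ω => (1:ℝ)) - Z := rfl
    rw [heq]
    refine (condExp_sub (integrable_const (1:ℝ)) hZint _).trans ?_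
    rw [condExp_const hm (1:ℝ), hpdef]
    filter_upwards with ω
    simp
  -- (3) ∫ (m₀/(1-p)) * (1-Z) = ∫ m₀
  have key3 : ∫ ω, m₀ ω / (1 - p ω) * (1 - Z ω) ∂μ = ∫ ω, m₀ ω ∂μ := by
    have hg : StronglyMeasurable[MeasurableSpace.comap W inferInstance]
        (fun ω => m₀ ω / (1 - p ω)) :=
      (hm₀_meas.div (measurable_const.sub hpMm)).stronglyMeasurable
    have hgbd : ∀ᵐ ω ∂μ, ‖m₀ ω / (1 - p ω)‖ ≤ C₀ * ε⁻¹ := by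
      filter_upwards [hinvq] with ω h
      rw [Real.norm_eq_abs] at h ⊢
      rw [div_eq_mul_inv, abs_mul]
      exact mul_le_mul (hm₀bd ω) h (abs_nonneg _) ((abs_nonneg _).trans (hm₀bd ω))
    rw [integral_mul_condexp_aux μ hm hg hgbd h1Zint]
    refine integral_congr_ae ?_
    filter_upwards [hqne, hcond1Z] with ω h0 hc
    rw [hc]
    field_simp
  -- (4) ∫ (1-p)⁻¹ * (Y*(1-Z)) = ∫ μ₀
  have key4 : ∫ ω, (1 - p ω)⁻¹ * (Y ω * (1 - Z ω)) ∂μ = ∫ ω, μ₀ ω ∂μ := by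
    have hg : StronglyMeasurable[MeasurableSpace.comap W inferInstance]
        (fun ω => (1 - p ω)⁻¹) := (measurable_const.sub hpMm).inv.stronglyMeasurable
    rw [integral_mul_condexp_aux μ hm hg hinvq hY1Zint]
    refine integral_congr_ae (Eventually.of_forall fun ω => ?_)
    rw [hμ₀def]
    simp [div_eq_inv_mul]
  -- integrability of the pieces
  have intA : Integrable (fun ω => m₁ ω / p ω * Z ω) μ := by
    refine int_of_bd _ (C₁ * ε⁻¹ * 1) ((hm₁.div hpm).mul hZ) ?_
    filter_upwards [hinvp] with ω h
    rw [Real.norm_eq_abs] at h ⊢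
    rw [abs_mul, div_eq_mul_inv, abs_mul]
    exact mul_le_mul (mul_le_mul (hm₁bd ω) h (abs_nonneg _)
      ((abs_nonneg _).trans (hm₁bd ω))) (hZbd ω) (abs_nonneg _)
      (mul_nonneg ((abs_nonneg _).trans (hm₁bd ω)) ((abs_nonneg _).trans h))
  have intB : Integrable (fun ω => (p ω)⁻¹ * (Y ω * Z ω)) μ := by
    refine int_of_bd _ (ε⁻¹ * CY) (hpm.inv.mul (hY.mul hZ)) ?_
    filter_upwards [hinvp] with ω h
    rw [Real.norm_eq_abs] at h ⊢
    rw [abs_mul]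
    exact mul_le_mul h (hYZbd ω) (abs_nonneg _) ((abs_nonneg _).trans h)
  have intA' : Integrable (fun ω => m₀ ω / (1 - p ω) * (1 - Z ω)) μ := by
    refine int_of_bd _ (C₀ * ε⁻¹ * 2) ((hm₀.div (measurable_const.sub hpm)).mul
      (measurable_const.sub hZ)) ?_
    filter_upwards [hinvq] with ω h
    rw [Real.norm_eq_abs] at h ⊢
    rw [abs_mul, div_eq_mul_inv, abs_mul]
    exact mul_le_mul (mul_le_mul (hm₀bd ω) h (abs_nonneg _)
      ((abs_nonneg _).trans (hm₀bd ω))) (h1Zbd ω) (abs_nonneg _)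
      (mul_nonneg ((abs_nonneg _).trans (hm₀bd ω)) ((abs_nonneg _).trans h))
  have intB' : Integrable (fun ω => (1 - p ω)⁻¹ * (Y ω * (1 - Z ω))) μ := by
    refine int_of_bd _ (ε⁻¹ * (CY * 2)) ((measurable_const.sub hpm).inv.mul
      (hY.mul (measurable_const.sub hZ))) ?_
    filter_upwards [hinvq] with ω h
    rw [Real.norm_eq_abs] at h ⊢
    rw [abs_mul]
    exact mul_le_mul h (hY1Zbd ω) (abs_nonneg _) ((abs_nonneg _).trans h)
  have intm₁ : Integrable (fun ω => m₁ ω) μ :=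
    int_of_bd _ C₁ hm₁ (Eventually.of_forall hm₁bd)
  have intm₀ : Integrable (fun ω => m₀ ω) μ :=
    int_of_bd _ C₀ hm₀ (Eventually.of_forall hm₀bd)
  -- integrability of μ₁, μ₀
  have intμ₁ : Integrable (fun ω => μ₁ ω) μ := by
    rw [hμ₁def]
    have hI : Integrable (μ[fun ω' => Y ω' * Z ω'|MeasurableSpace.comap W inferInstance]) μ :=
      integrable_condExp
    have h := hI.bdd_mul (c := ε⁻¹) hpm.inv.aestronglyMeasurable hinvp
    refine h.congr (Eventually.of_forall fun ω => ?_)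
    simp [div_eq_inv_mul]
  have intμ₀ : Integrable (fun ω => μ₀ ω) μ := by
    rw [hμ₀def]
    have hI : Integrable
        (μ[fun ω' => Y ω' * (1 - Z ω')|MeasurableSpace.comap W inferInstance]) μ :=
      integrable_condExp
    have h := hI.bdd_mul (c := ε⁻¹)
      (measurable_const.sub hpm).inv.aestronglyMeasurable hinvq
    refine h.congr (Eventually.of_forall fun ω => ?_)
    simp [div_eq_inv_mul]
  -- decompose the score pointwise
  have hdecomp : ∀ ω, m₁ ω - m₀ ω + Z ω * (Y ω - m₁ ω) / p ω
      - (1 - Z ω) * (Y ω - m₀ ω) / (1 - p ω)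
      = (m₁ ω - m₀ ω) + ((p ω)⁻¹ * (Y ω * Z ω) - m₁ ω / p ω * Z ω)
        - ((1 - p ω)⁻¹ * (Y ω * (1 - Z ω)) - m₀ ω / (1 - p ω) * (1 - Z ω)) := by
    intro ω
    rw [div_eq_mul_inv, div_eq_mul_inv, div_eq_mul_inv, div_eq_mul_inv]
    ring
  have intmm : Integrable (fun ω => m₁ ω - m₀ ω) μ := intm₁.sub intm₀
  have intBA : Integrable (fun ω => (p ω)⁻¹ * (Y ω * Z ω) - m₁ ω / p ω * Z ω) μ :=
    intB.sub intA
  have intBA' : Integrable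
      (fun ω => (1 - p ω)⁻¹ * (Y ω * (1 - Z ω)) - m₀ ω / (1 - p ω) * (1 - Z ω)) μ :=
    intB'.sub intA'
  have intL : Integrable (fun ω => (m₁ ω - m₀ ω)
      + ((p ω)⁻¹ * (Y ω * Z ω) - m₁ ω / p ω * Z ω)) μ := intmm.add intBA
  calc ∫ ω, (m₁ ω - m₀ ω + Z ω * (Y ω - m₁ ω) / p ω
        - (1 - Z ω) * (Y ω - m₀ ω) / (1 - p ω)) ∂μ
      = ∫ ω, ((m₁ ω - m₀ ω) + ((p ω)⁻¹ * (Y ω * Z ω) - m₁ ω / p ω * Z ω)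
        - ((1 - p ω)⁻¹ * (Y ω * (1 - Z ω)) - m₀ ω / (1 - p ω) * (1 - Z ω))) ∂μ :=
        integral_congr_ae (Eventually.of_forall fun ω => hdecomp ω)
    _ = (∫ ω, (m₁ ω - m₀ ω) ∂μ) + ((∫ ω, (p ω)⁻¹ * (Y ω * Z ω) ∂μ)
          - ∫ ω, m₁ ω / p ω * Z ω ∂μ)
        - ((∫ ω, (1 - p ω)⁻¹ * (Y ω * (1 - Z ω)) ∂μ)
          - ∫ ω, m₀ ω / (1 - p ω) * (1 - Z ω) ∂μ) := by
        rw [integral_sub intL intBA', integral_add intmm intBA,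
          integral_sub intB intA, integral_sub intB' intA',
          integral_sub intm₁ intm₀]
    _ = ∫ ω, (μ₁ ω - μ₀ ω) ∂μ := by
        rw [key1, key2, key3, key4, integral_sub intm₁ intm₀,
          integral_sub intμ₁ intμ₀]
        ring
end

section
/- Testable implication of mean independence (Theorem 2, sufficiency, binary treatment): suppose D is {0,1}-valued, Y = D·Y₁ + (1−D)·Y₀ with Y₀, Y₁ integrable, and for each d ∈ {0,1}, E[Y_d | σ(Z, D, X)] = E[Y_d | σ(X)] almost surely (joint conditional mean independence of the potential outcomes from (Z, D) given X). Then E[Y | σ(Z, D, X)] = E[Y | σ(D, X)] almost surely. -/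
open MeasureTheory ProbabilityTheory MeasurableSpace

/-- Testable implication of mean independence (Theorem 2, sufficiency, binary treatment): if
`D` is binary, `Y = D·Y₁ + (1−D)·Y₀`, and `E[Y_d | σ(Z,D,X)] = E[Y_d | σ(X)]` a.s. for
`d ∈ {0,1}`, then `E[Y | σ(Z,D,X)] = E[Y | σ(D,X)]` a.s. -/
theorem mean_independence_testable_implication
    {Ω γ δ : Type*} [MeasurableSpace Ω] [MeasurableSpace γ] [MeasurableSpace δ]
    (μ : Measure Ω) [IsProbabilityMeasure μ]
    (D : Ω → ℝ) (Y0 Y1 : Ω → ℝ) (Z : Ω → γ) (X : Ω → δ)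
    (hD : Measurable D) (hD01 : ∀ ω, D ω = 0 ∨ D ω = 1)
    (hY0 : Measurable Y0) (hY1 : Measurable Y1)
    (hY0int : Integrable Y0 μ) (hY1int : Integrable Y1 μ)
    (hZ : Measurable Z) (hX : Measurable X)
    (Y : Ω → ℝ) (hYdef : ∀ ω, Y ω = D ω * Y1 ω + (1 - D ω) * Y0 ω)
    (h0 : μ[Y0 | MeasurableSpace.comap (fun ω => (Z ω, D ω, X ω)) inferInstance]
      =ᵐ[μ] μ[Y0 | MeasurableSpace.comap X inferInstance])
    (h1 : μ[Y1 | MeasurableSpace.comap (fun ω => (Z ω, D ω, X ω)) inferInstance]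
      =ᵐ[μ] μ[Y1 | MeasurableSpace.comap X inferInstance]) :
    μ[Y | MeasurableSpace.comap (fun ω => (Z ω, D ω, X ω)) inferInstance]
      =ᵐ[μ] μ[Y | MeasurableSpace.comap (fun ω => (D ω, X ω)) inferInstance] := by
  rename_i mΩ mγ mδ hprob
  set m1 := MeasurableSpace.comap (fun ω => (Z ω, D ω, X ω)) inferInstance with hm1def
  set m2 := MeasurableSpace.comap (fun ω => (D ω, X ω)) inferInstance with hm2def
  set mX := MeasurableSpace.comap X inferInstance with hmXdef
  -- measurability of the defining maps w.r.t. the comap σ-algebras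
  have hmeas1 : Measurable[m1] (fun ω => (Z ω, D ω, X ω)) :=
    measurable_iff_comap_le.mpr le_rfl
  have hmeas2 : Measurable[m2] (fun ω => (D ω, X ω)) :=
    measurable_iff_comap_le.mpr le_rfl
  have hm1 : m1 ≤ mΩ := ((hZ.prodMk (hD.prodMk hX)).comap_le)
  have hm2 : m2 ≤ mΩ := ((hD.prodMk hX).comap_le)
  have hm21 : m2 ≤ m1 := by
    have : Measurable[m1] (fun ω => (D ω, X ω)) :=
      (measurable_snd.comp hmeas1)
    exact measurable_iff_comap_le.mp this
  have hmX2 : mX ≤ m2 := by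
    have : Measurable[m2] X := measurable_snd.comp hmeas2
    exact measurable_iff_comap_le.mp this
  have hmX1 : mX ≤ m1 := hmX2.trans hm21
  -- D and 1 - D are strongly measurable w.r.t. m1 and m2
  have hDm2 : Measurable[m2] D := measurable_fst.comp hmeas2
  have hDm1 : Measurable[m1] D := hDm2.mono hm21 le_rfl
  have hDm2' : StronglyMeasurable[m2] D := hDm2.stronglyMeasurable
  have hDm1' : StronglyMeasurable[m1] D := hDm1.stronglyMeasurable
  have h1Dm2 : StronglyMeasurable[m2] (fun ω => 1 - D ω) :=
    (stronglyMeasurable_const.sub hDm2')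
  have h1Dm1 : StronglyMeasurable[m1] (fun ω => 1 - D ω) :=
    (stronglyMeasurable_const.sub hDm1')
  -- bounds
  have hDb : ∀ ω, ‖D ω‖ ≤ 1 := by
    intro ω; rcases hD01 ω with h | h <;> simp [h]
  have h1Db : ∀ ω, ‖1 - D ω‖ ≤ 1 := by
    intro ω; rcases hD01 ω with h | h <;> simp [h]
  -- integrability
  have hDY1 : Integrable (fun ω => D ω * Y1 ω) μ :=
    hY1int.bdd_mul hD.aestronglyMeasurable (Filter.Eventually.of_forall hDb)
  have hDY0 : Integrable (fun ω => (1 - D ω) * Y0 ω) μ :=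
    hY0int.bdd_mul (hD.const_sub 1).aestronglyMeasurable (Filter.Eventually.of_forall h1Db)
  have hYfun : Y = (fun ω => D ω * Y1 ω) + fun ω => (1 - D ω) * Y0 ω := by
    funext ω; exact hYdef ω
  -- pull-out decomposition for a σ-algebra m where D is m-strongly-measurable
  have decomp : ∀ (m : MeasurableSpace Ω), m ≤ mΩ →
      StronglyMeasurable[m] D → StronglyMeasurable[m] (fun ω => 1 - D ω) →
      μ[Y | m] =ᵐ[μ] fun ω => D ω * (μ[Y1 | m]) ω + (1 - D ω) * (μ[Y0 | m]) ω := by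
    intro m hm hDs h1Ds
    have hadd : μ[Y | m] =ᵐ[μ]
        μ[(fun ω => D ω * Y1 ω) | m] + μ[(fun ω => (1 - D ω) * Y0 ω) | m] := by
      rw [hYfun]; exact condExp_add hDY1 hDY0 m
    have hmul1 : μ[(fun ω => D ω * Y1 ω) | m] =ᵐ[μ] fun ω => D ω * (μ[Y1 | m]) ω := by
      exact condExp_mul_of_stronglyMeasurable_left hDs hDY1 hY1int
    have hmul0 : μ[(fun ω => (1 - D ω) * Y0 ω) | m] =ᵐ[μ]
        fun ω => (1 - D ω) * (μ[Y0 | m]) ω :=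
      condExp_mul_of_stronglyMeasurable_left h1Ds hDY0 hY0int
    filter_upwards [hadd, hmul1, hmul0] with ω ha h1 h0'
    simp only [Pi.add_apply] at ha
    rw [ha, h1, h0']
  -- conditional expectations of Y0, Y1 w.r.t. m2 equal those w.r.t. mX
  have tower : ∀ (W : Ω → ℝ), Integrable W μ →
      μ[W | m1] =ᵐ[μ] μ[W | mX] → μ[W | m2] =ᵐ[μ] μ[W | mX] := by
    intro W hWint hW
    have t1 : μ[μ[W | m1] | m2] =ᵐ[μ] μ[W | m2] := condExp_condExp_of_le hm21 hm1
    have t2 : μ[μ[W | m1] | m2] =ᵐ[μ] μ[μ[W | mX] | m2] := condExp_congr_ae hW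
    have t3 : μ[μ[W | mX] | m2] = μ[W | mX] :=
      condExp_of_stronglyMeasurable (μ:=μ) hm2
        ((stronglyMeasurable_condExp).mono hmX2) integrable_condExp
    exact t1.symm.trans (t3 ▸ t2)
  have h0' : μ[Y0 | m2] =ᵐ[μ] μ[Y0 | mX] := tower Y0 hY0int h0
  have h1' : μ[Y1 | m2] =ᵐ[μ] μ[Y1 | mX] := tower Y1 hY1int h1
  have e1 := decomp m1 hm1 hDm1' h1Dm1
  have e2 := decomp m2 hm2 hDm2' h1Dm2
  filter_upwards [e1, e2, h0, h1, h0', h1'] with ω he1 he2 hh0 hh1 hh0' hh1'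
  rw [he1, he2, hh0, hh1, hh0', hh1']
end

section
/- Symmetry and reduction for mean independence under binary instrument within a treatment arm: suppose Z is {0,1}-valued, D is {0,1}-valued, X is a random element, and Y is integrable. If Y is conditionally independent of Z given (D, X), then for each d ∈ {0,1} the restricted conditional means agree: E[Y·Z·1{D=d} | σ(X)] · E[1{D=d} | σ(X)] = E[Y·1{D=d} | σ(X)] · E[Z·1{D=d} | σ(X)] almost surely. -/
open MeasureTheory ProbabilityTheory MeasurableSpace

private lemma intbl {Ω : Type*} [mΩ : MeasurableSpace Ω] {μ : Measure Ω} [IsFiniteMeasure μ]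
    {f : Ω → ℝ} {C : ℝ} (hf : AEStronglyMeasurable f μ) (h : ∀ᵐ ω ∂μ, |f ω| ≤ C) :
    Integrable f μ :=
  Integrable.mono' (integrable_const C) hf (by simpa [Real.norm_eq_abs] using h)

private lemma pullout_int {Ω : Type*} {m : MeasurableSpace Ω} [mΩ : MeasurableSpace Ω]
    {μ : Measure[mΩ] Ω} [IsFiniteMeasure μ] (hm : m ≤ mΩ) {φ f : Ω → ℝ}
    (hφ : StronglyMeasurable[m] φ) (hf : Integrable f μ)
    (hφf : Integrable (fun ω => φ ω * f ω) μ) :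
    ∫ ω, φ ω * f ω ∂μ = ∫ ω, φ ω * (μ[f|m]) ω ∂μ := by
  haveI : SigmaFinite (μ.trim hm) := by
    haveI := isFiniteMeasure_trim (μ := μ) hm; infer_instance
  have h : μ[φ * f|m] =ᵐ[μ] φ * μ[f|m] := condExp_mul_of_stronglyMeasurable_left hφ hφf hf
  calc ∫ ω, φ ω * f ω ∂μ = ∫ ω, (φ * f) ω ∂μ := rfl
    _ = ∫ ω, (μ[φ * f|m]) ω ∂μ := (integral_condExp hm (f := φ * f)).symm
    _ = ∫ ω, φ ω * (μ[f|m]) ω ∂μ := integral_congr_ae h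

private lemma rho_trick {Ω : Type*} {mY : MeasurableSpace Ω} [mΩ : MeasurableSpace Ω]
    {μ : Measure[mΩ] Ω} [IsFiniteMeasure μ] (hmY : mY ≤ mΩ) {Y ρ : Ω → ℝ}
    (hYm0 : Measurable[mY] Y) {C : ℝ} (hYbd : ∀ ω, |Y ω| ≤ C)
    (hρ : Integrable ρ μ)
    (h : ∀ s : Set Ω, MeasurableSet[mY] s → ∫ ω in s, ρ ω ∂μ = 0) :
    ∫ ω, Y ω * ρ ω ∂μ = 0 := by
  haveI : SigmaFinite (μ.trim hmY) := by
    haveI := isFiniteMeasure_trim (μ := μ) hmY; infer_instance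
  have hY : Measurable Y := hYm0.mono hmY le_rfl
  have hYρ : Integrable (fun ω => Y ω * ρ ω) μ :=
    Integrable.bdd_mul hρ hY.aestronglyMeasurable
      (ae_of_all _ fun ω => by simpa [Real.norm_eq_abs] using hYbd ω)
  have h0 : (fun _ : Ω => (0 : ℝ)) =ᵐ[μ] μ[ρ|mY] := by
    refine ae_eq_condExp_of_forall_setIntegral_eq hmY hρ
      (fun s _ _ => (integrable_const (0 : ℝ)).integrableOn) ?_
      stronglyMeasurable_const.aestronglyMeasurable
    intro s hs _
    simp [h s hs]
  have hYm : StronglyMeasurable[mY] Y := hYm0.stronglyMeasurable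
  rw [pullout_int hmY hYm hρ hYρ]
  refine integral_eq_zero_of_ae ?_
  filter_upwards [h0.symm] with ω hω
  simp [hω]

private lemma condexp_mul_indicator {Ω : Type*} {m : MeasurableSpace Ω} [mΩ : MeasurableSpace Ω]
    {μ : Measure[mΩ] Ω} [IsProbabilityMeasure μ] (hm : m ≤ mΩ) {Y : Ω → ℝ} (hY : Measurable Y)
    {CY : ℝ} (hYbd : ∀ ω, |Y ω| ≤ CY) {A : Set Ω} (hA : MeasurableSet A)
    (hset : ∀ t : Set ℝ, MeasurableSet t →
      (μ[((Y ⁻¹' t) ∩ A).indicator (fun _ => (1:ℝ))|m]) =ᵐ[μ]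
        fun ω => (μ[(Y ⁻¹' t).indicator (fun _ => (1:ℝ))|m]) ω
          * (μ[A.indicator (fun _ => (1:ℝ))|m]) ω) :
    (μ[fun ω => Y ω * A.indicator (fun _ => (1:ℝ)) ω|m]) =ᵐ[μ]
      fun ω => (μ[Y|m]) ω * (μ[A.indicator (fun _ => (1:ℝ))|m]) ω := by
  haveI : SigmaFinite (μ.trim hm) := by
    haveI := isFiniteMeasure_trim (μ := μ) hm; infer_instance
  set iA := A.indicator (fun _ => (1:ℝ)) with hiAdef
  have hiA_meas : Measurable iA := measurable_const.indicator hA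
  have hiA_bd : ∀ ω, |iA ω| ≤ 1 := fun ω => by
    by_cases hω : ω ∈ A <;> simp [iA, Set.indicator_of_mem, Set.indicator_of_notMem, hω]
  have hCY : ∀ ω, |Y ω| ≤ |CY| := fun ω => (hYbd ω).trans (le_abs_self CY)
  have h1CY : (1:ℝ) ≤ |CY| + 1 := by linarith [abs_nonneg CY]
  have hYint : Integrable Y μ := intbl hY.aestronglyMeasurable (ae_of_all _ hCY)
  have hYiA : Integrable (fun ω => Y ω * iA ω) μ := by
    refine intbl (C := |CY|) (hY.mul hiA_meas).aestronglyMeasurable (ae_of_all _ fun ω => ?_)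
    calc |Y ω * iA ω| = |Y ω| * |iA ω| := abs_mul _ _
      _ ≤ |CY| * 1 := mul_le_mul (hCY ω) (hiA_bd ω) (abs_nonneg _) (abs_nonneg _)
      _ = |CY| := mul_one _
  set h := μ[iA|m] with hhdef
  have h_sm : StronglyMeasurable[m] h := stronglyMeasurable_condExp
  have h_meas : Measurable h := (h_sm.mono hm).measurable
  have h_bd : ∀ᵐ ω ∂μ, |h ω| ≤ 1 := by
    have := ae_bdd_condExp_of_ae_bdd (m := m) (μ := μ) (R := 1) (f := iA)
      (ae_of_all _ fun ω => by simpa using hiA_bd ω)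
    simpa using this
  have key : ∀ (s : Set Ω), MeasurableSet s → ∀ F : Ω → ℝ,
      ∫ ω in s, F ω ∂μ = ∫ ω, s.indicator (fun _ => (1:ℝ)) ω * F ω ∂μ := by
    intro s hs F
    rw [← integral_indicator hs]
    congr 1; funext ω
    by_cases hω : ω ∈ s <;>
      simp [Set.indicator_of_mem, Set.indicator_of_notMem, hω]
  refine (ae_eq_condExp_of_forall_setIntegral_eq hm hYiA ?_ ?_ ?_).symm
  · intro s _ _
    have hint : Integrable (fun ω => h ω * (μ[Y|m]) ω) μ :=
      Integrable.bdd_mul integrable_condExp h_meas.aestronglyMeasurable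
        (by simpa [Real.norm_eq_abs] using h_bd)
    exact (hint.congr (ae_of_all _ fun ω => mul_comm (h ω) ((μ[Y|m]) ω))).integrableOn
  · intro s hs _
    have hsΩ : MeasurableSet s := hm s hs
    set is := s.indicator (fun _ => (1:ℝ)) with hisdef
    have his_m : StronglyMeasurable[m] is := stronglyMeasurable_const.indicator hs
    have his_meas : Measurable is := measurable_const.indicator hsΩ
    have his_bd : ∀ ω, |is ω| ≤ 1 := fun ω => by
      by_cases hω : ω ∈ s <;> simp [is, Set.indicator_of_mem, Set.indicator_of_notMem, hω]
    have hφ_sm : StronglyMeasurable[m] (fun ω => h ω * is ω) := h_sm.mul his_m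
    have hφ_bd : ∀ᵐ ω ∂μ, ‖h ω * is ω‖ ≤ 1 := by
      filter_upwards [h_bd] with ω hω
      rw [Real.norm_eq_abs, abs_mul]
      calc |h ω| * |is ω| ≤ 1 * 1 :=
        mul_le_mul hω (his_bd ω) (abs_nonneg _) zero_le_one
        _ = 1 := mul_one _
    have pull : ∀ f : Ω → ℝ, Measurable f → (∀ ω, |f ω| ≤ |CY| + 1) →
        ∫ ω, (h ω * is ω) * f ω ∂μ = ∫ ω, (h ω * is ω) * (μ[f|m]) ω ∂μ := by
      intro f hf hfbd
      have hfint : Integrable f μ := intbl hf.aestronglyMeasurable (ae_of_all _ hfbd)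
      refine pullout_int hm hφ_sm hfint ?_
      exact Integrable.bdd_mul hfint (h_meas.mul his_meas).aestronglyMeasurable hφ_bd
    have step1 : ∫ ω in s, (μ[Y|m]) ω * h ω ∂μ = ∫ ω in s, h ω * Y ω ∂μ := by
      rw [key s hsΩ, key s hsΩ]
      have e1 : ∫ ω, is ω * ((μ[Y|m]) ω * h ω) ∂μ
          = ∫ ω, (h ω * is ω) * (μ[Y|m]) ω ∂μ := by
        congr 1; funext ω; ring
      have e2 : ∫ ω, is ω * (h ω * Y ω) ∂μ = ∫ ω, (h ω * is ω) * Y ω ∂μ := by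
        congr 1; funext ω; ring
      rw [e1, e2, ← pull Y hY (fun ω => (hCY ω).trans (by linarith [abs_nonneg CY]))]
    set ρ := fun ω => is ω * (iA ω - h ω) with hρdef
    have hρ_meas : Measurable ρ := his_meas.mul (hiA_meas.sub h_meas)
    have hρ_int : Integrable ρ μ := by
      refine intbl (C := 2) hρ_meas.aestronglyMeasurable ?_
      filter_upwards [h_bd] with ω hω
      calc |is ω * (iA ω - h ω)| = |is ω| * |iA ω - h ω| := abs_mul _ _
        _ ≤ 1 * (|iA ω| + |h ω|) :=
          mul_le_mul (his_bd ω) (abs_sub _ _) (abs_nonneg _) zero_le_one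
        _ ≤ 1 * (1 + 1) := by
          have := hiA_bd ω
          nlinarith
        _ = 2 := by norm_num
    have hzero : ∀ t : Set ℝ, MeasurableSet t → ∫ ω in Y ⁻¹' t, ρ ω ∂μ = 0 := by
      intro t ht
      have hYt : MeasurableSet (Y ⁻¹' t) := hY ht
      set it := (Y ⁻¹' t).indicator (fun _ => (1:ℝ)) with hitdef
      have hit_meas : Measurable it := measurable_const.indicator hYt
      have hit_bd : ∀ ω, |it ω| ≤ 1 := fun ω => by
        by_cases hω : ω ∈ Y ⁻¹' t <;>
          simp [it, Set.indicator_of_mem, Set.indicator_of_notMem, hω]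
      have hit_int : Integrable it μ :=
        intbl hit_meas.aestronglyMeasurable (ae_of_all _ hit_bd)
      have hinter : ∀ ω, it ω * iA ω = ((Y ⁻¹' t) ∩ A).indicator (fun _ => (1:ℝ)) ω := by
        intro ω
        by_cases h1 : ω ∈ Y ⁻¹' t <;> by_cases h2 : ω ∈ A <;>
          simp [it, iA, Set.indicator_of_mem, Set.indicator_of_notMem, h1, h2,
            Set.indicator_apply, Set.mem_inter_iff]
      have hiInter_meas : Measurable (((Y ⁻¹' t) ∩ A).indicator (fun _ => (1:ℝ))) :=
        measurable_const.indicator (hYt.inter hA)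
      have hiInter_bd : ∀ ω, |((Y ⁻¹' t) ∩ A).indicator (fun _ => (1:ℝ)) ω| ≤ 1 := fun ω => by
        by_cases hω : ω ∈ (Y ⁻¹' t) ∩ A <;>
          simp [Set.indicator_of_mem, Set.indicator_of_notMem, hω]
      have hiInter_int : Integrable (((Y ⁻¹' t) ∩ A).indicator (fun _ => (1:ℝ))) μ :=
        intbl hiInter_meas.aestronglyMeasurable (ae_of_all _ hiInter_bd)
      have int1 : Integrable (fun ω => it ω * (is ω * iA ω)) μ := by
        refine intbl (C := 1) (hit_meas.mul (his_meas.mul hiA_meas)).aestronglyMeasurable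
          (ae_of_all _ fun ω => ?_)
        have := hit_bd ω; have := his_bd ω; have := hiA_bd ω
        calc |it ω * (is ω * iA ω)| = |it ω| * (|is ω| * |iA ω|) := by
              rw [abs_mul, abs_mul]
          _ ≤ 1 * (1 * 1) := by
              apply mul_le_mul (hit_bd ω) _ (by positivity) zero_le_one
              exact mul_le_mul (his_bd ω) (hiA_bd ω) (abs_nonneg _) zero_le_one
          _ = 1 := by norm_num
      have int2 : Integrable (fun ω => (h ω * is ω) * it ω) μ := by
        have := Integrable.bdd_mul hit_int (h_meas.mul his_meas).aestronglyMeasurable hφ_bd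
        exact this
      -- T1 = T2
      have T1eq : ∫ ω, it ω * (is ω * iA ω) ∂μ = ∫ ω, (h ω * is ω) * it ω ∂μ := by
        have a1 : ∫ ω, it ω * (is ω * iA ω) ∂μ
            = ∫ ω, is ω * (((Y ⁻¹' t) ∩ A).indicator (fun _ => (1:ℝ)) ω) ∂μ := by
          congr 1; funext ω; rw [← hinter ω]; ring
        have a2 : ∫ ω, is ω * (((Y ⁻¹' t) ∩ A).indicator (fun _ => (1:ℝ)) ω) ∂μ
            = ∫ ω in s, ((Y ⁻¹' t) ∩ A).indicator (fun _ => (1:ℝ)) ω ∂μ :=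
          (key s hsΩ _).symm
        have a3 : ∫ ω in s, ((Y ⁻¹' t) ∩ A).indicator (fun _ => (1:ℝ)) ω ∂μ
            = ∫ ω in s, (μ[((Y ⁻¹' t) ∩ A).indicator (fun _ => (1:ℝ))|m]) ω ∂μ :=
          (setIntegral_condExp hm hiInter_int hs).symm
        have a4 : ∫ ω in s, (μ[((Y ⁻¹' t) ∩ A).indicator (fun _ => (1:ℝ))|m]) ω ∂μ
            = ∫ ω in s, (μ[it|m]) ω * h ω ∂μ := by
          refine setIntegral_congr_ae hsΩ ?_
          filter_upwards [hset t ht] with ω hω _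
          exact hω
        have a5 : ∫ ω in s, (μ[it|m]) ω * h ω ∂μ
            = ∫ ω, (h ω * is ω) * (μ[it|m]) ω ∂μ := by
          rw [key s hsΩ]
          congr 1; funext ω; ring
        have a6 : ∫ ω, (h ω * is ω) * (μ[it|m]) ω ∂μ = ∫ ω, (h ω * is ω) * it ω ∂μ :=
          (pull it hit_meas fun ω => (hit_bd ω).trans h1CY).symm
        rw [a1, a2, a3, a4, a5, a6]
      calc ∫ ω in Y ⁻¹' t, ρ ω ∂μ = ∫ ω, it ω * ρ ω ∂μ := key _ hYt _
        _ = ∫ ω, (it ω * (is ω * iA ω) - (h ω * is ω) * it ω) ∂μ := by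
            congr 1; funext ω; simp only [hρdef]; ring
        _ = ∫ ω, it ω * (is ω * iA ω) ∂μ - ∫ ω, (h ω * is ω) * it ω ∂μ :=
            integral_sub int1 int2
        _ = 0 := by rw [T1eq]; ring
    have hYρ0 : ∫ ω, Y ω * ρ ω ∂μ = 0 := by
      refine rho_trick (mY := MeasurableSpace.comap Y inferInstance) hY.comap_le
        (measurable_iff_comap_le.mpr le_rfl) hCY hρ_int ?_
      rintro u ⟨t, ht, rfl⟩
      exact hzero t ht
    have intYiA' : Integrable (fun ω => is ω * (Y ω * iA ω)) μ := by
      refine Integrable.bdd_mul hYiA his_meas.aestronglyMeasurable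
        (ae_of_all _ fun ω => by simpa [Real.norm_eq_abs] using his_bd ω)
    have intYh' : Integrable (fun ω => is ω * (h ω * Y ω)) μ := by
      have hhY : Integrable (fun ω => h ω * Y ω) μ :=
        Integrable.bdd_mul hYint h_meas.aestronglyMeasurable
          (by simpa [Real.norm_eq_abs] using h_bd)
      exact Integrable.bdd_mul hhY his_meas.aestronglyMeasurable
        (ae_of_all _ fun ω => by simpa [Real.norm_eq_abs] using his_bd ω)
    have expand : ∫ ω, Y ω * ρ ω ∂μ
        = ∫ ω in s, Y ω * iA ω ∂μ - ∫ ω in s, h ω * Y ω ∂μ := by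
      rw [key s hsΩ, key s hsΩ, ← integral_sub intYiA' intYh']
      congr 1; funext ω; simp only [hρdef]; ring
    have step2 : ∫ ω in s, h ω * Y ω ∂μ = ∫ ω in s, Y ω * iA ω ∂μ := by
      rw [expand] at hYρ0; linarith
    rw [step1, step2]
  · exact (stronglyMeasurable_condExp.mul stronglyMeasurable_condExp).aestronglyMeasurable

private def traceAlg {Ω : Type*} (n : MeasurableSpace Ω) (B : Set Ω) : MeasurableSpace Ω where
  MeasurableSet' t := ∃ t', MeasurableSet[n] t' ∧ B ∩ t = B ∩ t'
  measurableSet_empty := ⟨∅, MeasurableSet.empty, rfl⟩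
  measurableSet_compl := by
    rintro t ⟨t', ht', heq⟩
    refine ⟨t'ᶜ, ht'.compl, ?_⟩
    ext ω
    have hω := Set.ext_iff.mp heq ω
    simp only [Set.mem_inter_iff, Set.mem_compl_iff] at *
    tauto
  measurableSet_iUnion := by
    intro f hf
    choose t' ht' heq using hf
    refine ⟨⋃ i, t' i, MeasurableSet.iUnion ht', ?_⟩
    rw [Set.inter_iUnion, Set.inter_iUnion]
    exact Set.iUnion_congr heq

private lemma trace_exists {Ω δ : Type*} [mΩ : MeasurableSpace Ω] [mδ : MeasurableSpace δ]
    {D : Ω → ℝ} {X : Ω → δ} (hD : Measurable D) (hX : Measurable X) (d : ℝ) :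
    ∀ t : Set Ω, MeasurableSet[MeasurableSpace.comap (fun ω => (D ω, X ω)) inferInstance] t →
      ∃ t', MeasurableSet[MeasurableSpace.comap X inferInstance] t' ∧
        D ⁻¹' {d} ∩ t = D ⁻¹' {d} ∩ t' := by
  set B := D ⁻¹' {d} with hBdef
  have hle : MeasurableSpace.comap (fun ω => (D ω, X ω)) inferInstance
      ≤ traceAlg (MeasurableSpace.comap X inferInstance) B := by
    have hprod : (inferInstance : MeasurableSpace (ℝ × δ))
        = (inferInstance : MeasurableSpace ℝ).comap Prod.fst ⊔ mδ.comap Prod.snd := rfl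
    rw [hprod, MeasurableSpace.comap_sup, MeasurableSpace.comap_comp,
      MeasurableSpace.comap_comp]
    refine sup_le ?_ ?_
    · rintro t ⟨u, hu, rfl⟩
      by_cases hd : d ∈ u
      · refine ⟨Set.univ, @MeasurableSet.univ Ω (MeasurableSpace.comap X inferInstance), ?_⟩
        ext ω
        simp only [Set.mem_inter_iff, Set.mem_preimage, Function.comp_apply,
          Set.mem_univ, and_true, hBdef, Set.mem_singleton_iff]
        exact ⟨fun h => h.1, fun h => ⟨h, by rw [h]; exact hd⟩⟩
      · refine ⟨∅, @MeasurableSet.empty Ω (MeasurableSpace.comap X inferInstance), ?_⟩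
        ext ω
        simp only [Set.mem_inter_iff, Set.mem_preimage, Function.comp_apply,
          Set.mem_empty_iff_false, and_false, iff_false, hBdef, Set.mem_singleton_iff]
        rintro ⟨h1, h2⟩
        rw [h1] at h2
        exact hd h2
    · rintro t ⟨u, hu, rfl⟩
      exact ⟨X ⁻¹' u, ⟨u, hu, rfl⟩, rfl⟩
  exact fun t ht => hle t ht

private lemma exists_measurable_eq_on {Ω δ : Type*} [mΩ : MeasurableSpace Ω]
    [mδ : MeasurableSpace δ] {D : Ω → ℝ} {X : Ω → δ} (hD : Measurable D) (hX : Measurable X)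
    {d C : ℝ} (hC : 0 ≤ C) {f : Ω → ℝ}
    (hf : Measurable[MeasurableSpace.comap (fun ω => (D ω, X ω)) inferInstance] f)
    (hfbd : ∀ ω, |f ω| ≤ C) :
    ∃ u : Ω → ℝ, Measurable[MeasurableSpace.comap X inferInstance] u ∧
      (∀ ω, |u ω| ≤ C) ∧ ∀ ω ∈ D ⁻¹' {d}, u ω = f ω := by
  classical
  have htrace := trace_exists hD hX (D := D) (X := X) d
  have hSq : ∀ q : ℚ, MeasurableSet[MeasurableSpace.comap (fun ω => (D ω, X ω)) inferInstance]
      (f ⁻¹' Set.Ioi (q : ℝ)) := fun q => hf measurableSet_Ioi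
  choose T hT hTeq using fun q : ℚ => htrace _ (hSq q)
  set T' : ℚ → Set Ω := fun q => ⋂ p : {p : ℚ // p ≤ q}, T p with hT'def
  have hT' : ∀ q, MeasurableSet[MeasurableSpace.comap X inferInstance] (T' q) :=
    fun q => MeasurableSet.iInter fun p => hT p
  have hT'eq : ∀ q : ℚ, ∀ ω ∈ D ⁻¹' {d}, (ω ∈ T' q ↔ (q : ℝ) < f ω) := by
    intro q ω hB
    simp only [hT'def, Set.mem_iInter, Subtype.forall]
    constructor
    · intro hall
      have h1 : ω ∈ T q := hall q le_rfl
      have h2 := Set.ext_iff.mp (hTeq q) ω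
      simp only [Set.mem_inter_iff, Set.mem_preimage, Set.mem_Ioi] at h2
      exact (h2.mpr ⟨hB, h1⟩).2
    · intro hlt p hp
      have h2 := Set.ext_iff.mp (hTeq p) ω
      simp only [Set.mem_inter_iff, Set.mem_preimage, Set.mem_Ioi] at h2
      refine (h2.mp ⟨hB, ?_⟩).2
      exact lt_of_le_of_lt (by exact_mod_cast hp) hlt
  set g : ℚ → Ω → ℝ := fun q ω => if ω ∈ T' q then max (min (q : ℝ) C) (-C) else -C with hgdef
  have hgmeas : ∀ q, Measurable[MeasurableSpace.comap X inferInstance] (g q) := by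
    intro q
    exact Measurable.ite (hT' q) measurable_const measurable_const
  have hgC : ∀ q ω, g q ω ≤ C := by
    intro q ω
    simp only [hgdef]
    split
    · exact max_le (min_le_right _ _) (neg_le_self hC)
    · exact neg_le_self hC
  have hgnegC : ∀ q ω, -C ≤ g q ω := by
    intro q ω
    simp only [hgdef]
    split
    · exact le_max_right _ _
    · exact le_rfl
  set u : Ω → ℝ := fun ω => ⨆ q : ℚ, g q ω with hudef
  have hbdd : ∀ ω, BddAbove (Set.range fun q => g q ω) := by
    intro ω
    refine ⟨C, ?_⟩
    rintro x ⟨q, rfl⟩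
    exact hgC q ω
  have humeas : Measurable[MeasurableSpace.comap X inferInstance] u :=
    Measurable.iSup hgmeas
  have hubd : ∀ ω, |u ω| ≤ C := by
    intro ω
    rw [abs_le]
    constructor
    · exact le_trans (hgnegC 0 ω) (le_ciSup (hbdd ω) 0)
    · exact ciSup_le fun q => hgC q ω
  refine ⟨u, humeas, hubd, ?_⟩
  intro ω hB
  have hfle : -C ≤ f ω ∧ f ω ≤ C := abs_le.mp (hfbd ω)
  apply le_antisymm
  · refine ciSup_le fun q => ?_
    simp only [hgdef]
    split
    · rename_i hmem
      have hq : (q : ℝ) < f ω := (hT'eq q ω hB).mp hmem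
      exact max_le (le_trans (min_le_left _ _) hq.le) hfle.1
    · exact hfle.1
  · by_contra hlt
    push_neg at hlt
    obtain ⟨q, hq1, hq2⟩ := exists_rat_btwn hlt
    have hmem : ω ∈ T' q := (hT'eq q ω hB).mpr hq2
    have hgq : g q ω = max (min (q : ℝ) C) (-C) := by simp only [hgdef, if_pos hmem]
    have hqC : (q : ℝ) ≤ C := le_trans hq2.le hfle.2
    have : (q : ℝ) ≤ g q ω := by
      rw [hgq, min_eq_left hqC]
      exact le_max_left _ _
    have huq : g q ω ≤ u ω := le_ciSup (hbdd ω) q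
    linarith

private lemma reduce {Ω : Type*} {n m : MeasurableSpace Ω} [mΩ : MeasurableSpace Ω]
    {μ : Measure[mΩ] Ω} [IsProbabilityMeasure μ] (hnm : n ≤ m) (hm : m ≤ mΩ)
    {W χ w : Ω → ℝ} (hW : Measurable W) {CW : ℝ} (hWbd : ∀ ω, |W ω| ≤ CW)
    (hχm : StronglyMeasurable[m] χ) (hχbd : ∀ ω, |χ ω| ≤ 1)
    (hw : StronglyMeasurable[n] w) {Cw : ℝ} (hwbd : ∀ ω, |w ω| ≤ Cw)
    (hkey : (fun ω => (μ[W|m]) ω * χ ω) =ᵐ[μ] fun ω => w ω * χ ω) :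
    μ[fun ω => W ω * χ ω|n] =ᵐ[μ] fun ω => w ω * (μ[χ|n]) ω := by
  have hn : n ≤ mΩ := hnm.trans hm
  haveI : SigmaFinite (μ.trim hm) := by
    haveI := isFiniteMeasure_trim (μ := μ) hm; infer_instance
  haveI : SigmaFinite (μ.trim hn) := by
    haveI := isFiniteMeasure_trim (μ := μ) hn; infer_instance
  have hχ_meas : Measurable χ := (hχm.mono hm).measurable
  have hw_meas : Measurable w := (hw.mono hn).measurable
  have hW_int : Integrable W μ := intbl hW.aestronglyMeasurable (ae_of_all _ hWbd)
  have hχ_int : Integrable χ μ := intbl hχ_meas.aestronglyMeasurable (ae_of_all _ hχbd)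
  have hWχ_int : Integrable (fun ω => χ ω * W ω) μ :=
    Integrable.bdd_mul hW_int hχ_meas.aestronglyMeasurable
      (ae_of_all _ fun ω => by simpa [Real.norm_eq_abs] using hχbd ω)
  have h1 : μ[fun ω => W ω * χ ω|m] =ᵐ[μ] fun ω => χ ω * (μ[W|m]) ω := by
    have h2 : μ[χ * W|m] =ᵐ[μ] χ * μ[W|m] :=
      condExp_mul_of_stronglyMeasurable_left hχm hWχ_int hW_int
    have h3 : (fun ω => W ω * χ ω) = χ * W := by funext ω; exact mul_comm _ _
    rw [h3]; exact h2
  have tower : μ[fun ω => W ω * χ ω|n] =ᵐ[μ] μ[μ[fun ω => W ω * χ ω|m]|n] :=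
    (condExp_condExp_of_le hnm hm).symm
  have h4 : μ[μ[fun ω => W ω * χ ω|m]|n] =ᵐ[μ] μ[fun ω => w ω * χ ω|n] := by
    refine condExp_congr_ae (h1.trans ?_)
    filter_upwards [hkey] with ω hω
    rw [mul_comm]
    exact hω
  have hwχ_int : Integrable (fun ω => w ω * χ ω) μ :=
    Integrable.bdd_mul hχ_int hw_meas.aestronglyMeasurable
      (ae_of_all _ fun ω => by simpa [Real.norm_eq_abs] using hwbd ω)
  have h5 : μ[fun ω => w ω * χ ω|n] =ᵐ[μ] fun ω => w ω * (μ[χ|n]) ω :=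
    condExp_mul_of_stronglyMeasurable_left hw hwχ_int hχ_int
  exact tower.trans (h4.trans h5)

/-- Symmetry and reduction for mean independence under a binary instrument within a treatment arm:
if `Y ⊥ Z | (D, X)` with `Z, D` binary, then for each `d ∈ {0,1}`,
`E[Y·Z·1{D=d} | σ(X)] · E[1{D=d} | σ(X)] = E[Y·1{D=d} | σ(X)] · E[Z·1{D=d} | σ(X)]` a.s. -/
theorem restricted_conditional_means_agree
    {Ω δ : Type*}
    [MeasurableSpace Ω] [StandardBorelSpace Ω]
    [MeasurableSpace δ] [StandardBorelSpace δ]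
    (μ : Measure Ω) [IsProbabilityMeasure μ]
    (Z D : Ω → ℝ) (X : Ω → δ) (Y : Ω → ℝ)
    (hZ : Measurable Z) (hZ01 : ∀ ω, Z ω = 0 ∨ Z ω = 1)
    (hD : Measurable D) (hD01 : ∀ ω, D ω = 0 ∨ D ω = 1)
    (hX : Measurable X) (hY : Measurable Y)
    (CY : ℝ) (hYbd : ∀ ω, |Y ω| ≤ CY)
    (hCI : CondIndepFun (MeasurableSpace.comap (fun ω => (D ω, X ω)) inferInstance)
      ((hD.prodMk hX).comap_le) Y Z μ) :
    ∀ d ∈ ({0, 1} : Set ℝ),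
      (fun ω =>
          (μ[fun ω' => Y ω' * Z ω' * (if D ω' = d then (1:ℝ) else 0)
              | MeasurableSpace.comap X inferInstance]) ω
            * (μ[fun ω' => (if D ω' = d then (1:ℝ) else 0)
              | MeasurableSpace.comap X inferInstance]) ω)
        =ᵐ[μ] fun ω =>
          (μ[fun ω' => Y ω' * (if D ω' = d then (1:ℝ) else 0)
              | MeasurableSpace.comap X inferInstance]) ω
            * (μ[fun ω' => Z ω' * (if D ω' = d then (1:ℝ) else 0)
              | MeasurableSpace.comap X inferInstance]) ω := by
  intro d _
  classical
  have hm : MeasurableSpace.comap (fun ω => (D ω, X ω)) inferInstance ≤ ‹MeasurableSpace Ω› :=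
    (hD.prodMk hX).comap_le
  have hnm : MeasurableSpace.comap X inferInstance
      ≤ MeasurableSpace.comap (fun ω => (D ω, X ω)) inferInstance := by
    have h2 : ((inferInstance : MeasurableSpace δ).comap Prod.snd).comap
        (fun ω => (D ω, X ω)) = MeasurableSpace.comap X inferInstance :=
      MeasurableSpace.comap_comp
    have h1 : ((inferInstance : MeasurableSpace δ).comap Prod.snd).comap (fun ω => (D ω, X ω))
        ≤ MeasurableSpace.comap (fun ω => (D ω, X ω)) inferInstance :=
      MeasurableSpace.comap_mono measurable_snd.comap_le
    rwa [h2] at h1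
  have hn : MeasurableSpace.comap X inferInstance ≤ ‹MeasurableSpace Ω› := hX.comap_le
  -- bounds
  have hZ1 : ∀ ω, |Z ω| ≤ 1 := fun ω => by rcases hZ01 ω with h | h <;> simp [h]
  have hCY : ∀ ω, |Y ω| ≤ |CY| := fun ω => (hYbd ω).trans (le_abs_self CY)
  -- the indicator χ
  have hχ_eq : (fun ω => if D ω = d then (1:ℝ) else 0)
      = (D ⁻¹' {d}).indicator (fun _ => (1:ℝ)) := by
    funext ω
    by_cases h : D ω = d <;>
      simp [Set.indicator_apply, Set.mem_preimage, Set.mem_singleton_iff, h]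
  have hDm : Measurable[MeasurableSpace.comap (fun ω => (D ω, X ω)) inferInstance] D := by
    have hpair : Measurable[MeasurableSpace.comap (fun ω => (D ω, X ω)) inferInstance]
        (fun ω => (D ω, X ω)) := measurable_iff_comap_le.mpr le_rfl
    exact measurable_fst.comp hpair
  have hBm : MeasurableSet[MeasurableSpace.comap (fun ω => (D ω, X ω)) inferInstance]
      (D ⁻¹' {d}) := hDm (measurableSet_singleton d)
  have hχm : StronglyMeasurable[MeasurableSpace.comap (fun ω => (D ω, X ω)) inferInstance]
      (fun ω => if D ω = d then (1:ℝ) else 0) := by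
    rw [hχ_eq]
    exact stronglyMeasurable_const.indicator hBm
  have hχbd : ∀ ω, |(if D ω = d then (1:ℝ) else 0)| ≤ 1 := fun ω => by
    by_cases h : D ω = d <;> simp [h]
  -- conditional independence at the level of sets
  have hsets := (condIndepFun_iff_condExp_inter_preimage_eq_mul
    (hm' := (hD.prodMk hX).comap_le) hY hZ).mp hCI
  have hA : MeasurableSet (Z ⁻¹' {1}) := hZ (measurableSet_singleton 1)
  have hZeq : Z = (Z ⁻¹' {1}).indicator (fun _ => (1:ℝ)) := by
    funext ω
    rcases hZ01 ω with h | h <;>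
      simp [Set.indicator_apply, Set.mem_preimage, Set.mem_singleton_iff, h]
  -- product rule at level m
  have hprod_m : (μ[(fun ω => Y ω * Z ω)|MeasurableSpace.comap (fun ω => (D ω, X ω))
        inferInstance]) =ᵐ[μ]
      fun ω => (μ[Y|MeasurableSpace.comap (fun ω => (D ω, X ω)) inferInstance]) ω
        * (μ[Z|MeasurableSpace.comap (fun ω => (D ω, X ω)) inferInstance]) ω := by
    have h2 := condexp_mul_indicator hm hY hYbd hA
      (fun t ht => hsets t {1} ht (measurableSet_singleton 1))
    rw [hZeq]
    exact h2
  -- truncations of the two conditional expectations at level m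
  have hf_sm : StronglyMeasurable[MeasurableSpace.comap (fun ω => (D ω, X ω)) inferInstance]
      (μ[Y|MeasurableSpace.comap (fun ω => (D ω, X ω)) inferInstance]) :=
    stronglyMeasurable_condExp
  have hg_sm : StronglyMeasurable[MeasurableSpace.comap (fun ω => (D ω, X ω)) inferInstance]
      (μ[Z|MeasurableSpace.comap (fun ω => (D ω, X ω)) inferInstance]) :=
    stronglyMeasurable_condExp
  have hftr_meas : Measurable[MeasurableSpace.comap (fun ω => (D ω, X ω)) inferInstance]
      (fun ω => max (min ((μ[Y|MeasurableSpace.comap (fun ω => (D ω, X ω))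
        inferInstance]) ω) |CY|) (-|CY|)) :=
    (hf_sm.measurable.min measurable_const).max measurable_const
  have hgtr_meas : Measurable[MeasurableSpace.comap (fun ω => (D ω, X ω)) inferInstance]
      (fun ω => max (min ((μ[Z|MeasurableSpace.comap (fun ω => (D ω, X ω))
        inferInstance]) ω) 1) (-1)) :=
    (hg_sm.measurable.min measurable_const).max measurable_const
  have htrbd : ∀ x : ℝ, ∀ c : ℝ, 0 ≤ c → |max (min x c) (-c)| ≤ c := by
    intro x c hc
    rw [abs_le]
    exact ⟨le_max_right _ _, max_le (min_le_right _ _) (neg_le_self hc)⟩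
  obtain ⟨u, humeas, hubd, hueq⟩ := exists_measurable_eq_on hD hX (abs_nonneg CY)
    hftr_meas (fun ω => htrbd _ _ (abs_nonneg CY)) (d := d)
  obtain ⟨v, hvmeas, hvbd, hveq⟩ := exists_measurable_eq_on hD hX (zero_le_one)
    hgtr_meas (fun ω => htrbd _ _ zero_le_one) (d := d)
  -- the truncations agree a.e. with the conditional expectations
  have hf_bd : ∀ᵐ ω ∂μ, |(μ[Y|MeasurableSpace.comap (fun ω => (D ω, X ω))
      inferInstance]) ω| ≤ |CY| := by
    have := ae_bdd_condExp_of_ae_bdd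
      (m := MeasurableSpace.comap (fun ω => (D ω, X ω)) inferInstance) (μ := μ)
      (R := Real.nnabs CY) (f := Y)
      (ae_of_all _ fun ω => by simpa [Real.coe_nnabs] using hCY ω)
    simpa [Real.coe_nnabs] using this
  have hg_bd : ∀ᵐ ω ∂μ, |(μ[Z|MeasurableSpace.comap (fun ω => (D ω, X ω))
      inferInstance]) ω| ≤ 1 := by
    have := ae_bdd_condExp_of_ae_bdd
      (m := MeasurableSpace.comap (fun ω => (D ω, X ω)) inferInstance) (μ := μ)
      (R := 1) (f := Z) (ae_of_all _ fun ω => by simpa using hZ1 ω)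
    simpa using this
  have htr_eq : ∀ x c : ℝ, |x| ≤ c → max (min x c) (-c) = x := by
    intro x c hx
    rw [min_eq_left (abs_le.mp hx).2, max_eq_left (abs_le.mp hx).1]
  -- key a.e. identities on the event {D = d}
  have hkey_f : (fun ω => (μ[Y|MeasurableSpace.comap (fun ω => (D ω, X ω)) inferInstance]) ω
        * (if D ω = d then (1:ℝ) else 0))
      =ᵐ[μ] fun ω => u ω * (if D ω = d then (1:ℝ) else 0) := by
    filter_upwards [hf_bd] with ω hω
    by_cases hDd : D ω = d
    · have hBω : ω ∈ D ⁻¹' {d} := by simp [Set.mem_preimage, hDd]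
      rw [hueq ω hBω, htr_eq _ _ hω]
    · simp [hDd]
  have hkey_g : (fun ω => (μ[Z|MeasurableSpace.comap (fun ω => (D ω, X ω)) inferInstance]) ω
        * (if D ω = d then (1:ℝ) else 0))
      =ᵐ[μ] fun ω => v ω * (if D ω = d then (1:ℝ) else 0) := by
    filter_upwards [hg_bd] with ω hω
    by_cases hDd : D ω = d
    · have hBω : ω ∈ D ⁻¹' {d} := by simp [Set.mem_preimage, hDd]
      rw [hveq ω hBω, htr_eq _ _ hω]
    · simp [hDd]
  have hkey_fg : (fun ω => (μ[(fun ω' => Y ω' * Z ω')|MeasurableSpace.comap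
        (fun ω => (D ω, X ω)) inferInstance]) ω * (if D ω = d then (1:ℝ) else 0))
      =ᵐ[μ] fun ω => (u ω * v ω) * (if D ω = d then (1:ℝ) else 0) := by
    filter_upwards [hprod_m, hf_bd, hg_bd] with ω hω hfω hgω
    by_cases hDd : D ω = d
    · have hBω : ω ∈ D ⁻¹' {d} := by simp [Set.mem_preimage, hDd]
      rw [hω, hueq ω hBω, hveq ω hBω, htr_eq _ _ hfω, htr_eq _ _ hgω]
    · simp [hDd]
  have hu_sm : StronglyMeasurable[MeasurableSpace.comap X inferInstance] u :=
    humeas.stronglyMeasurable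
  have hv_sm : StronglyMeasurable[MeasurableSpace.comap X inferInstance] v :=
    hvmeas.stronglyMeasurable
  -- the three reductions at level n
  have ha : (μ[fun ω' => Y ω' * Z ω' * (if D ω' = d then (1:ℝ) else 0)
        | MeasurableSpace.comap X inferInstance])
      =ᵐ[μ] fun ω => (u ω * v ω)
        * (μ[fun ω' => (if D ω' = d then (1:ℝ) else 0)
            | MeasurableSpace.comap X inferInstance]) ω := by
    refine reduce hnm hm (hY.mul hZ) (CW := |CY|) ?_ hχm hχbd (hu_sm.mul hv_sm)
      (Cw := |CY|) ?_ hkey_fg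
    · intro ω
      calc |Y ω * Z ω| = |Y ω| * |Z ω| := abs_mul _ _
        _ ≤ |CY| * 1 := mul_le_mul (hCY ω) (hZ1 ω) (abs_nonneg _) (abs_nonneg _)
        _ = |CY| := mul_one _
    · intro ω
      calc |u ω * v ω| = |u ω| * |v ω| := abs_mul _ _
        _ ≤ |CY| * 1 := mul_le_mul (hubd ω) (hvbd ω) (abs_nonneg _) (abs_nonneg _)
        _ = |CY| := mul_one _
  have hb : (μ[fun ω' => Y ω' * (if D ω' = d then (1:ℝ) else 0)
        | MeasurableSpace.comap X inferInstance])
      =ᵐ[μ] fun ω => u ω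
        * (μ[fun ω' => (if D ω' = d then (1:ℝ) else 0)
            | MeasurableSpace.comap X inferInstance]) ω :=
    reduce hnm hm hY (CW := |CY|) hCY hχm hχbd hu_sm (Cw := |CY|) hubd hkey_f
  have hc : (μ[fun ω' => Z ω' * (if D ω' = d then (1:ℝ) else 0)
        | MeasurableSpace.comap X inferInstance])
      =ᵐ[μ] fun ω => v ω
        * (μ[fun ω' => (if D ω' = d then (1:ℝ) else 0)
            | MeasurableSpace.comap X inferInstance]) ω :=
    reduce hnm hm hZ (CW := 1) hZ1 hχm hχbd hv_sm (Cw := 1) hvbd hkey_g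
  filter_upwards [ha, hb, hc] with ω h1 h2 h3
  simp only [h1, h2, h3]
  ring
end
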